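/- arXiv:1608.04603 — 4 statements merged into one kernel-verified Lean document; each statement's English description precedes it below -/
import Mathlib

section
/- Let A and B be real symmetric N×N matrices, and let a₁, b₁ be real numbers such that A − a₁I and B − b₁I are positive definite. Let λ₁ ≥ … ≥ λ_N be the eigenvalues of A and μ₁ ≥ … ≥ μ_N the eigenvalues of B, both listed in decreasing order. Then tr((A−a₁I)^{-1}(B−b₁I)(A−a₁I)^{-1}) ≥ Σ_{i=1}^N (μ_i − b₁)/(λ_i − a₁)². Moreover, if equality holds then A and B commute, and there is an orthogonal matrix Q with Q^{-1}AQ = diag(λ₁,…,λ_N) and Q^{-1}BQ = diag(μ₁,…,μ_N). -/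
open Matrix


open Finset

namespace Stmt4Core

variable (n : ℕ) (W : ℕ → ℕ → ℝ) (c d : ℕ → ℝ)

noncomputable def aJ (c : ℕ → ℝ) : ℕ → ℝ := fun k => if k = 0 then c 0 else c k - c (k-1)
noncomputable def bJ (n : ℕ) (d : ℕ → ℝ) : ℕ → ℝ := fun l => if l = n then d (n-1) else d (l-1) - d l

lemma c_telescope (i : ℕ) : ∑ k ∈ range (i+1), aJ c k = c i := by
  induction i with
  | zero => simp [aJ]
  | succ m ih =>
      rw [Finset.sum_range_succ, ih]
      simp [aJ]

lemma c_eq (i : ℕ) (hi : i < n) :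
    c i = ∑ k ∈ range n, aJ c k * (if k ≤ i then 1 else 0) := by
  calc c i = ∑ k ∈ range (i+1), aJ c k * (if k ≤ i then 1 else 0) := by
        rw [Finset.sum_congr rfl (g := fun k => aJ c k) ?_, c_telescope]
        intro k hk
        simp only [Finset.mem_range, Nat.lt_succ_iff] at hk
        simp [hk]
    _ = ∑ k ∈ range n, aJ c k * (if k ≤ i then 1 else 0) := by
        apply Finset.sum_subset (Finset.range_subset_range.mpr (by omega))
        intro k _ hk
        simp only [Finset.mem_range, not_lt] at hk
        have : ¬ k ≤ i := by omega
        simp [this]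

lemma d_telescope (j : ℕ) (hj : j < n) :
    ∑ l ∈ Ico (j+1) (n+1), bJ n d l = d j := by
  rw [Finset.sum_Ico_succ_top (by omega)]
  have h1 : ∀ l ∈ Ico (j+1) n, bJ n d l = d (l-1) - d l := by
    intro l hl; simp at hl; simp only [bJ]; rw [if_neg (by omega)]
  rw [Finset.sum_congr rfl h1, Finset.sum_Ico_eq_sum_range]
  have h2 : ∀ m ∈ range (n - (j+1)),
      d (j+1+m-1) - d (j+1+m) = (fun m => d (j+m)) m - (fun m => d (j+m)) (m+1) := by
    intro m _
    simp only
    congr 2 <;> omega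
  rw [Finset.sum_congr rfl h2, Finset.sum_range_sub' (fun m => d (j+m))]
  have h3 : j + (n - (j+1)) = n - 1 := by omega
  simp only [h3, bJ, if_pos rfl, eq_self_iff_true, if_true]
  ring

lemma d_eq (j : ℕ) (hj : j < n) :
    d j = ∑ l ∈ Ico 1 (n+1), bJ n d l * (if j < l then 1 else 0) := by
  calc d j = ∑ l ∈ Ico (j+1) (n+1), bJ n d l * (if j < l then 1 else 0) := by
        rw [Finset.sum_congr rfl (g := fun l => bJ n d l) ?_, d_telescope n d j hj]
        intro l hl
        simp only [Finset.mem_Ico] at hl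
        rw [if_pos (by omega), mul_one]
    _ = ∑ l ∈ Ico 1 (n+1), bJ n d l * (if j < l then 1 else 0) := by
        apply Finset.sum_subset (Finset.Ico_subset_Ico (by omega) le_rfl)
        intro l hl hl'
        simp only [Finset.mem_Ico] at hl hl'
        rw [if_neg (by omega), mul_zero]

end Stmt4Core

namespace Stmt4Core

noncomputable def UU (n : ℕ) (W : ℕ → ℕ → ℝ) (k l : ℕ) : ℝ :=
  ∑ i ∈ range n, ∑ j ∈ range n, if k ≤ i ∧ j < l then W i j else 0

noncomputable def MM (n k l : ℕ) : ℝ :=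
  ∑ i ∈ range n, if k ≤ i ∧ i < l then (1:ℝ) else 0

variable (n : ℕ) (W : ℕ → ℕ → ℝ) (c d : ℕ → ℝ)

lemma pointwise_expand (i j : ℕ) (hi : i < n) (hj : j < n) :
    W i j * (c i * d j)
      = ∑ k ∈ range n, ∑ l ∈ Ico 1 (n+1),
          aJ c k * bJ n d l * (if k ≤ i ∧ j < l then W i j else 0) := by
  have key : ∀ k l : ℕ,
      aJ c k * bJ n d l * (if k ≤ i ∧ j < l then W i j else 0)
        = W i j * ((aJ c k * (if k ≤ i then 1 else 0)) * (bJ n d l * (if j < l then 1 else 0))) := by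
    intro k l
    by_cases h1 : k ≤ i <;> by_cases h2 : j < l <;> simp [h1, h2] <;> ring
  simp only [key]
  simp only [← Finset.mul_sum]
  congr 1
  rw [← Finset.sum_mul, ← c_eq n c i hi, ← d_eq n d j hj]

lemma D_expand :
    ∑ i ∈ range n, ∑ j ∈ range n, W i j * (c i * d j)
      = ∑ k ∈ range n, ∑ l ∈ Ico 1 (n+1), aJ c k * bJ n d l * UU n W k l := by
  have h1 : ∑ i ∈ range n, ∑ j ∈ range n, W i j * (c i * d j)
      = ∑ i ∈ range n, ∑ j ∈ range n, ∑ k ∈ range n, ∑ l ∈ Ico 1 (n+1),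
          aJ c k * bJ n d l * (if k ≤ i ∧ j < l then W i j else 0) := by
    apply Finset.sum_congr rfl; intro i hi'
    apply Finset.sum_congr rfl; intro j hj'
    exact pointwise_expand n W c d i j (mem_range.mp hi') (mem_range.mp hj')
  rw [h1]
  have swap2 : ∀ (A B : Finset ℕ) (f : ℕ → ℕ → ℝ),
      ∑ x ∈ A, ∑ y ∈ B, f x y = ∑ y ∈ B, ∑ x ∈ A, f x y := fun A B f => Finset.sum_comm
  have h2 : ∀ (t : ℕ → ℕ → ℕ → ℕ → ℝ),
      ∑ i ∈ range n, ∑ j ∈ range n, ∑ k ∈ range n, ∑ l ∈ Ico 1 (n+1), t i j k l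
        = ∑ k ∈ range n, ∑ l ∈ Ico 1 (n+1), ∑ i ∈ range n, ∑ j ∈ range n, t i j k l := by
    intro t
    calc ∑ i ∈ range n, ∑ j ∈ range n, ∑ k ∈ range n, ∑ l ∈ Ico 1 (n+1), t i j k l
        = ∑ i ∈ range n, ∑ k ∈ range n, ∑ j ∈ range n, ∑ l ∈ Ico 1 (n+1), t i j k l :=
          Finset.sum_congr rfl fun i _ => swap2 _ _ _
      _ = ∑ k ∈ range n, ∑ i ∈ range n, ∑ j ∈ range n, ∑ l ∈ Ico 1 (n+1), t i j k l :=
          swap2 _ _ _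
      _ = ∑ k ∈ range n, ∑ i ∈ range n, ∑ l ∈ Ico 1 (n+1), ∑ j ∈ range n, t i j k l :=
          Finset.sum_congr rfl fun k _ => Finset.sum_congr rfl fun i _ => swap2 _ _ _
      _ = ∑ k ∈ range n, ∑ l ∈ Ico 1 (n+1), ∑ i ∈ range n, ∑ j ∈ range n, t i j k l :=
          Finset.sum_congr rfl fun k _ => swap2 _ _ _
  rw [h2]
  apply Finset.sum_congr rfl; intro k _
  apply Finset.sum_congr rfl; intro l _
  simp only [UU, ← Finset.mul_sum]

end Stmt4Core

namespace Stmt4Core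

variable (n : ℕ) (W : ℕ → ℕ → ℝ) (c d : ℕ → ℝ)

lemma diag_expand :
    ∑ i ∈ range n, c i * d i
      = ∑ k ∈ range n, ∑ l ∈ Ico 1 (n+1), aJ c k * bJ n d l * MM n k l := by
  have h1 : ∑ i ∈ range n, c i * d i
      = ∑ i ∈ range n, ∑ k ∈ range n, ∑ l ∈ Ico 1 (n+1),
          aJ c k * bJ n d l * (if k ≤ i ∧ i < l then (1:ℝ) else 0) := by
    apply Finset.sum_congr rfl; intro i hi'
    have hi : i < n := mem_range.mp hi'
    have key : ∀ k l : ℕ,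
        aJ c k * bJ n d l * (if k ≤ i ∧ i < l then (1:ℝ) else 0)
          = (aJ c k * (if k ≤ i then 1 else 0)) * (bJ n d l * (if i < l then 1 else 0)) := by
      intro k l
      by_cases h1 : k ≤ i <;> by_cases h2 : i < l <;> simp [h1, h2]
    simp only [key]
    rw [← Finset.sum_mul_sum, ← c_eq n c i hi, ← d_eq n d i hi]
  rw [h1]
  have swap2 : ∀ (A B : Finset ℕ) (f : ℕ → ℕ → ℝ),
      ∑ x ∈ A, ∑ y ∈ B, f x y = ∑ y ∈ B, ∑ x ∈ A, f x y := fun A B f => Finset.sum_comm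
  calc ∑ i ∈ range n, ∑ k ∈ range n, ∑ l ∈ Ico 1 (n+1),
          aJ c k * bJ n d l * (if k ≤ i ∧ i < l then (1:ℝ) else 0)
      = ∑ k ∈ range n, ∑ i ∈ range n, ∑ l ∈ Ico 1 (n+1),
          aJ c k * bJ n d l * (if k ≤ i ∧ i < l then (1:ℝ) else 0) := swap2 _ _ _
    _ = ∑ k ∈ range n, ∑ l ∈ Ico 1 (n+1), ∑ i ∈ range n,
          aJ c k * bJ n d l * (if k ≤ i ∧ i < l then (1:ℝ) else 0) :=
        Finset.sum_congr rfl fun k _ => swap2 _ _ _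
    _ = ∑ k ∈ range n, ∑ l ∈ Ico 1 (n+1), aJ c k * bJ n d l * MM n k l := by
        apply Finset.sum_congr rfl; intro k _
        apply Finset.sum_congr rfl; intro l _
        simp only [MM, ← Finset.mul_sum]

/-- the lower-left block sum -/
noncomputable def VV (n : ℕ) (W : ℕ → ℕ → ℝ) (k l : ℕ) : ℝ :=
  ∑ i ∈ range n, ∑ j ∈ range n, if i < k ∧ j < l then W i j else 0

/-- the upper-right block sum -/
noncomputable def XX (n : ℕ) (W : ℕ → ℕ → ℝ) (k l : ℕ) : ℝ :=
  ∑ i ∈ range n, ∑ j ∈ range n, if i < k ∧ l ≤ j then W i j else 0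

variable (hcol : ∀ j, j < n → ∑ i ∈ range n, W i j = 1)
variable (hrow : ∀ i, i < n → ∑ j ∈ range n, W i j = 1)

include hcol in
lemma UU_add_VV (k l : ℕ) (hl : l ≤ n) : UU n W k l + VV n W k l = l := by
  rw [UU, VV, ← Finset.sum_add_distrib]
  have h1 : ∀ i ∈ range n,
      (∑ j ∈ range n, if k ≤ i ∧ j < l then W i j else 0)
        + (∑ j ∈ range n, if i < k ∧ j < l then W i j else 0)
      = ∑ j ∈ range n, if j < l then W i j else 0 := by
    intro i _
    rw [← Finset.sum_add_distrib]
    apply Finset.sum_congr rfl; intro j _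
    by_cases h1 : k ≤ i <;> by_cases h2 : j < l <;> simp [h1, h2, not_le.mp] <;> omega
  rw [Finset.sum_congr rfl h1, Finset.sum_comm]
  have h2 : ∀ j ∈ range n, (∑ i ∈ range n, if j < l then W i j else 0)
      = if j < l then (1:ℝ) else 0 := by
    intro j hj
    by_cases h : j < l
    · simp only [h, if_true]; exact hcol j (mem_range.mp hj)
    · simp [h]
  rw [Finset.sum_congr rfl h2, Finset.sum_boole]
  congr 1
  rw [show Finset.filter (fun j => j < l) (range n) = range l by
    ext j; simp [Finset.mem_filter, Finset.mem_range]; omega]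
  simp

include hrow in
lemma VV_add_XX (k l : ℕ) (hk : k ≤ n) : VV n W k l + XX n W k l = k := by
  rw [VV, XX, ← Finset.sum_add_distrib]
  have h1 : ∀ i ∈ range n,
      (∑ j ∈ range n, if i < k ∧ j < l then W i j else 0)
        + (∑ j ∈ range n, if i < k ∧ l ≤ j then W i j else 0)
      = if i < k then (1:ℝ) else 0 := by
    intro i hi
    rw [← Finset.sum_add_distrib]
    by_cases h : i < k
    · simp only [h, true_and, if_true]
      rw [← hrow i (mem_range.mp hi)]
      apply Finset.sum_congr rfl; intro j _
      by_cases h2 : j < l <;> simp [h2] <;> omega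
    · simp [h]
  rw [Finset.sum_congr rfl h1, Finset.sum_boole]
  congr 1
  rw [show Finset.filter (fun i => i < k) (range n) = range k by
    ext i; simp [Finset.mem_filter, Finset.mem_range]; omega]
  simp

end Stmt4Core

namespace Stmt4Core

variable (n : ℕ) (W : ℕ → ℕ → ℝ) (c d : ℕ → ℝ)
variable (hW0 : ∀ i j, i < n → j < n → 0 ≤ W i j)
variable (hrow : ∀ i, i < n → ∑ j ∈ range n, W i j = 1)
variable (hcol : ∀ j, j < n → ∑ i ∈ range n, W i j = 1)

lemma MM_val (k l : ℕ) (hl : l ≤ n) : MM n k l = ((Ico k l).card : ℝ) := by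
  rw [MM, Finset.sum_boole]
  congr 1
  congr 1
  ext i; simp [Finset.mem_filter, Finset.mem_range, Finset.mem_Ico]; omega

include hW0 in
lemma UU_nonneg (k l : ℕ) : 0 ≤ UU n W k l := by
  apply Finset.sum_nonneg; intro i hi
  apply Finset.sum_nonneg; intro j hj
  by_cases h : k ≤ i ∧ j < l
  · simp [h]; exact hW0 i j (mem_range.mp hi) (mem_range.mp hj)
  · simp [h]

include hW0 in
lemma VV_nonneg (k l : ℕ) : 0 ≤ VV n W k l := by
  apply Finset.sum_nonneg; intro i hi
  apply Finset.sum_nonneg; intro j hj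
  by_cases h : i < k ∧ j < l
  · simp [h]; exact hW0 i j (mem_range.mp hi) (mem_range.mp hj)
  · simp [h]

include hW0 in
lemma XX_nonneg (k l : ℕ) : 0 ≤ XX n W k l := by
  apply Finset.sum_nonneg; intro i hi
  apply Finset.sum_nonneg; intro j hj
  by_cases h : i < k ∧ l ≤ j
  · simp [h]; exact hW0 i j (mem_range.mp hi) (mem_range.mp hj)
  · simp [h]

include hW0 hrow hcol in
lemma UU_ge_MM (k l : ℕ) (hk : k ≤ n) (hl : l ≤ n) : MM n k l ≤ UU n W k l := by
  rw [MM_val n k l hl]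
  rcases le_or_gt l k with h | h
  · rw [show Ico k l = ∅ by apply Finset.Ico_eq_empty; omega]
    simpa using UU_nonneg n W hW0 k l
  · have h1 := UU_add_VV n W hcol k l hl
    have h2 := VV_add_XX n W hrow k l hk
    have h3 := XX_nonneg n W hW0 k l
    have hcard : ((Ico k l).card : ℝ) = (l : ℝ) - k := by
      rw [Nat.card_Ico]; push_cast [Nat.cast_sub (le_of_lt h)]; ring
    rw [hcard]
    linarith

include hcol in
lemma UU_zero_left (l : ℕ) (hl : l ≤ n) : UU n W 0 l = MM n 0 l := by
  have h1 := UU_add_VV n W hcol 0 l hl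
  have h2 : VV n W 0 l = 0 := by
    rw [VV]; apply Finset.sum_eq_zero; intro i _; apply Finset.sum_eq_zero; intro j _
    simp
  rw [MM_val n 0 l hl, Nat.card_Ico]
  simp at h1 ⊢
  linarith [h1, h2]

include hrow in
lemma UU_top_right (k : ℕ) (hk : k ≤ n) : UU n W k n = MM n k n := by
  have h1 : UU n W k n = ∑ i ∈ range n, if k ≤ i then (1:ℝ) else 0 := by
    rw [UU]
    apply Finset.sum_congr rfl; intro i hi
    by_cases h : k ≤ i
    · simp only [h, true_and]
      rw [← hrow i (mem_range.mp hi)]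
      apply Finset.sum_congr rfl; intro j hj
      simp [mem_range.mp hj, h]
    · simp [h]
  have h2 : MM n k n = ∑ i ∈ range n, if k ≤ i then (1:ℝ) else 0 := by
    rw [MM]
    apply Finset.sum_congr rfl; intro i hi
    have := mem_range.mp hi
    by_cases h : k ≤ i <;> simp [h, this]
  rw [h1, h2]

end Stmt4Core

namespace Stmt4Core

theorem core (n : ℕ) (W : ℕ → ℕ → ℝ) (c d : ℕ → ℝ)
    (hW0 : ∀ i j, i < n → j < n → 0 ≤ W i j)
    (hrow : ∀ i, i < n → ∑ j ∈ range n, W i j = 1)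
    (hcol : ∀ j, j < n → ∑ i ∈ range n, W i j = 1)
    (hc : ∀ i j, i ≤ j → j < n → c i ≤ c j)
    (hd : ∀ i j, i ≤ j → j < n → d j ≤ d i) :
    (∑ i ∈ range n, c i * d i ≤ ∑ i ∈ range n, ∑ j ∈ range n, W i j * (c i * d j)) ∧
    ((∑ i ∈ range n, ∑ j ∈ range n, W i j * (c i * d j)) = ∑ i ∈ range n, c i * d i →
      ∀ i j, i < n → j < n → W i j ≠ 0 → ∃ m, m < n ∧ c m = c i ∧ d m = d j) := by
  -- nonnegativity of each term of the difference
  have term_nonneg : ∀ k ∈ range n, ∀ l ∈ Ico 1 (n+1),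
      0 ≤ aJ c k * bJ n d l * (UU n W k l - MM n k l) := by
    intro k hk l hl
    simp only [mem_range, mem_Ico] at hk hl
    rcases Nat.eq_zero_or_pos k with hk0 | hk0
    · subst hk0
      rw [UU_zero_left n W hcol l (by omega)]
      simp
    rcases eq_or_lt_of_le (Nat.lt_succ_iff.mp hl.2) with hln | hln
    · rw [show l = n by omega, UU_top_right n W hrow k (le_of_lt hk)]
      simp
    · have ha : 0 ≤ aJ c k := by
        rw [aJ, if_neg (by omega)]
        have := hc (k-1) k (by omega) hk
        linarith
      have hb : 0 ≤ bJ n d l := by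
        rw [bJ, if_neg (by omega)]
        have := hd (l-1) l (by omega) (by omega)
        linarith
      have hU := UU_ge_MM n W hW0 hrow hcol k l (by omega) (by omega)
      have := mul_nonneg (mul_nonneg ha hb) (by linarith : (0:ℝ) ≤ UU n W k l - MM n k l)
      linarith [this]
  have diff_eq : ∑ i ∈ range n, ∑ j ∈ range n, W i j * (c i * d j) - ∑ i ∈ range n, c i * d i
      = ∑ k ∈ range n, ∑ l ∈ Ico 1 (n+1), aJ c k * bJ n d l * (UU n W k l - MM n k l) := by
    rw [D_expand n W c d, diag_expand n c d, ← Finset.sum_sub_distrib]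
    apply Finset.sum_congr rfl; intro k _
    rw [← Finset.sum_sub_distrib]
    apply Finset.sum_congr rfl; intro l _
    ring
  constructor
  · have : 0 ≤ ∑ k ∈ range n, ∑ l ∈ Ico 1 (n+1), aJ c k * bJ n d l * (UU n W k l - MM n k l) :=
      Finset.sum_nonneg fun k hk => Finset.sum_nonneg fun l hl => term_nonneg k hk l hl
    linarith [diff_eq, this]
  · intro heq i j hi hj hWij
    -- every term vanishes
    have hzero : ∀ k ∈ range n, ∀ l ∈ Ico 1 (n+1),
        aJ c k * bJ n d l * (UU n W k l - MM n k l) = 0 := by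
      have hs : ∑ k ∈ range n, ∑ l ∈ Ico 1 (n+1),
          aJ c k * bJ n d l * (UU n W k l - MM n k l) = 0 := by
        rw [← diff_eq, heq]; ring
      have h1 := (Finset.sum_eq_zero_iff_of_nonneg
        (fun k hk => Finset.sum_nonneg fun l hl => term_nonneg k hk l hl)).mp hs
      intro k hk l hl
      exact (Finset.sum_eq_zero_iff_of_nonneg (fun l hl => term_nonneg k hk l hl)).mp (h1 k hk) l hl
    by_contra hno
    push_neg at hno
    -- classes
    set Cc : Finset ℕ := (range n).filter (fun m => c m = c i) with hCc
    set Cd : Finset ℕ := (range n).filter (fun m => d m = d j) with hCd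
    have hiCc : i ∈ Cc := by simp [hCc, hi]
    have hjCd : j ∈ Cd := by simp [hCd, hj]
    have hdisj : ∀ m, m ∈ Cc → m ∉ Cd := by
      intro m hm hm'
      simp only [hCc, hCd, Finset.mem_filter, Finset.mem_range] at hm hm'
      exact hno m hm.1 hm.2 hm'.2
    have hCcne : Cc.Nonempty := ⟨i, hiCc⟩
    have hCdne : Cd.Nonempty := ⟨j, hjCd⟩
    set k₁ := Cc.min' hCcne
    set k₂ := Cc.max' hCcne
    set l₁ := Cd.min' hCdne
    set l₂ := Cd.max' hCdne
    have hk₁ : k₁ ∈ Cc := Finset.min'_mem _ _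
    have hk₂ : k₂ ∈ Cc := Finset.max'_mem _ _
    have hl₁ : l₁ ∈ Cd := Finset.min'_mem _ _
    have hl₂ : l₂ ∈ Cd := Finset.max'_mem _ _
    have memCc : ∀ m, m ∈ Cc ↔ (m < n ∧ c m = c i) := by
      intro m; simp [hCc]
    have memCd : ∀ m, m ∈ Cd ↔ (m < n ∧ d m = d j) := by
      intro m; simp [hCd]
    have hk₁n : k₁ < n := ((memCc k₁).mp hk₁).1
    have hk₂n : k₂ < n := ((memCc k₂).mp hk₂).1
    have hl₁n : l₁ < n := ((memCd l₁).mp hl₁).1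
    have hl₂n : l₂ < n := ((memCd l₂).mp hl₂).1
    -- the classes are "intervals": anything between k₁ and k₂ is in Cc
    have hCcint : ∀ m, k₁ ≤ m → m ≤ k₂ → m ∈ Cc := by
      intro m h1 h2
      have hc1 : c k₁ ≤ c m := hc _ _ h1 (by omega)
      have hc2 : c m ≤ c k₂ := hc _ _ h2 hk₂n
      rw [((memCc k₁).mp hk₁).2] at hc1
      rw [((memCc k₂).mp hk₂).2] at hc2
      exact (memCc m).mpr ⟨by omega, le_antisymm hc2 hc1⟩
    have hCdint : ∀ m, l₁ ≤ m → m ≤ l₂ → m ∈ Cd := by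
      intro m h1 h2
      have hd1 : d m ≤ d l₁ := hd _ _ h1 (by omega)
      have hd2 : d l₂ ≤ d m := hd _ _ h2 hl₂n
      rw [((memCd l₁).mp hl₁).2] at hd1
      rw [((memCd l₂).mp hl₂).2] at hd2
      exact (memCd m).mpr ⟨by omega, le_antisymm hd1 hd2⟩
    have hsep : l₂ < k₁ ∨ k₂ < l₁ := by
      by_contra hsep
      push_neg at hsep
      have := hdisj (max k₁ l₁) (hCcint _ (le_max_left _ _) (by
        rcases max_cases k₁ l₁ with ⟨h, _⟩ | ⟨h, _⟩ <;> rw [h]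
        · exact Finset.le_max' _ _ hk₁
        · exact hsep.2))
      exact this (hCdint _ (le_max_right _ _) (by
        rcases max_cases k₁ l₁ with ⟨h, _⟩ | ⟨h, _⟩ <;> rw [h]
        · exact hsep.1
        · exact Finset.le_max' _ _ hl₁))
    -- in either case we find a vanishing block containing (i,j)
    rcases hsep with hsep | hsep
    · -- d-class strictly left of c-class : use corner i ≥ k₁, j < l₂+1
      set k := k₁
      set l := l₂ + 1
      have hkr : k ∈ range n := by simp [hk₁n]
      have hlr : l ∈ Ico 1 (n+1) := by simp [mem_Ico]; omega
      have ha : 0 < aJ c k := by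
        rw [aJ, if_neg (by omega)]
        have h1 : c (k₁ - 1) ≤ c k₁ := hc _ _ (by omega) hk₁n
        have h2 : c (k₁ - 1) ≠ c k₁ := by
          intro h
          have : k₁ - 1 ∈ Cc := (memCc _).mpr ⟨by omega, h.trans ((memCc k₁).mp hk₁).2⟩
          have := Finset.min'_le _ _ this
          omega
        have : c (k₁-1) < c k₁ := lt_of_le_of_ne h1 h2
        linarith
      have hb : 0 < bJ n d l := by
        rw [bJ, if_neg (by omega)]
        have h1 : d (l₂+1) ≤ d l₂ := hd _ _ (by omega) (by omega)
        have h2 : d (l₂+1) ≠ d l₂ := by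
          intro h
          have : l₂ + 1 ∈ Cd := (memCd _).mpr ⟨by omega, h.trans ((memCd l₂).mp hl₂).2⟩
          have := Finset.le_max' _ _ this
          omega
        have h3 : l - 1 = l₂ := by omega
        rw [h3]
        have : d (l₂+1) < d l₂ := lt_of_le_of_ne h1 h2
        linarith
      have hUM := hzero k hkr l hlr
      have hMM : MM n k l = 0 := by
        rw [MM]; apply Finset.sum_eq_zero; intro m _
        rw [if_neg (by omega)]
      have hUU : UU n W k l = 0 := by
        rcases mul_eq_zero.mp hUM with h | h
        · exact absurd h (mul_ne_zero (ne_of_gt ha) (ne_of_gt hb))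
        · rw [hMM] at h; linarith
      -- but the (i,j) term of UU is W i j ≠ 0, contradiction
      have : W i j = 0 := by
        have h1 : ∀ x ∈ range n, (0:ℝ) ≤ ∑ y ∈ range n, if k ≤ x ∧ y < l then W x y else 0 := by
          intro x hx
          apply Finset.sum_nonneg; intro y hy
          by_cases h : k ≤ x ∧ y < l
          · simp [h]; exact hW0 x y (mem_range.mp hx) (mem_range.mp hy)
          · simp [h]
        have h2 := (Finset.sum_eq_zero_iff_of_nonneg h1).mp hUU i (by simp [hi])
        have h3 : ∀ y ∈ range n, (0:ℝ) ≤ if k ≤ i ∧ y < l then W i y else 0 := by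
          intro y hy
          by_cases h : k ≤ i ∧ y < l
          · simp [h]; exact hW0 i y hi (mem_range.mp hy)
          · simp [h]
        have h4 := (Finset.sum_eq_zero_iff_of_nonneg h3).mp h2 j (by simp [hj])
        have hki : k ≤ i := Finset.min'_le _ _ hiCc
        have hjl : j < l := by
          have := Finset.le_max' _ _ hjCd
          omega
        rwa [if_pos ⟨hki, hjl⟩] at h4
      exact hWij this
    · -- c-class strictly left of d-class : use corner i < k₂+1, j ≥ l₁
      set k := k₂ + 1
      set l := l₁
      have hkr : k ∈ range n := by simp [mem_range]; omega
      have hlr : l ∈ Ico 1 (n+1) := by simp [mem_Ico]; omega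
      have ha : 0 < aJ c k := by
        rw [aJ, if_neg (by omega)]
        have h1 : c k₂ ≤ c (k₂+1) := hc _ _ (by omega) (by omega)
        have h2 : c (k₂+1) ≠ c k₂ := by
          intro h
          have : k₂ + 1 ∈ Cc := (memCc _).mpr ⟨by omega, h.trans ((memCc k₂).mp hk₂).2⟩
          have := Finset.le_max' _ _ this
          omega
        have h3 : k - 1 = k₂ := by omega
        rw [h3]
        have : c k₂ < c (k₂+1) := lt_of_le_of_ne h1 (fun h => h2 h.symm)
        linarith
      have hb : 0 < bJ n d l := by
        rw [bJ, if_neg (by omega)]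
        have h1 : d l₁ ≤ d (l₁-1) := hd _ _ (by omega) hl₁n
        have h2 : d (l₁-1) ≠ d l₁ := by
          intro h
          have : l₁ - 1 ∈ Cd := (memCd _).mpr ⟨by omega, h.trans ((memCd l₁).mp hl₁).2⟩
          have := Finset.min'_le _ _ this
          omega
        have : d l₁ < d (l₁-1) := lt_of_le_of_ne h1 (fun h => h2 h.symm)
        linarith
      have hUM := hzero k hkr l hlr
      have hUMeq : UU n W k l = MM n k l := by
        rcases mul_eq_zero.mp hUM with h | h
        · exact absurd h (mul_ne_zero (ne_of_gt ha) (ne_of_gt hb))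
        · linarith
      -- deduce XX = 0
      have hXX : XX n W k l = 0 := by
        have h1 := UU_add_VV n W hcol k l (by simp [mem_range] at hkr hlr ⊢; omega)
        have h2 := VV_add_XX n W hrow k l (by simp [mem_range] at hkr; omega)
        have hMMv : MM n k l = (l:ℝ) - k := by
          rw [MM_val n k l (by simp [mem_Ico] at hlr; omega), Nat.card_Ico,
            Nat.cast_sub (by omega)]
        rw [hUMeq, hMMv] at h1
        linarith
      have : W i j = 0 := by
        have h1 : ∀ x ∈ range n, (0:ℝ) ≤ ∑ y ∈ range n, if x < k ∧ l ≤ y then W x y else 0 := by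
          intro x hx
          apply Finset.sum_nonneg; intro y hy
          by_cases h : x < k ∧ l ≤ y
          · simp [h]; exact hW0 x y (mem_range.mp hx) (mem_range.mp hy)
          · simp [h]
        have h2 := (Finset.sum_eq_zero_iff_of_nonneg h1).mp hXX i (by simp [hi])
        have h3 : ∀ y ∈ range n, (0:ℝ) ≤ if i < k ∧ l ≤ y then W i y else 0 := by
          intro y hy
          by_cases h : i < k ∧ l ≤ y
          · simp [h]; exact hW0 i y hi (mem_range.mp hy)
          · simp [h]
        have h4 := (Finset.sum_eq_zero_iff_of_nonneg h3).mp h2 j (by simp [hj])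
        have hik : i < k := by
          have := Finset.le_max' _ _ hiCc
          omega
        have hlj : l ≤ j := Finset.min'_le _ _ hjCd
        rwa [if_pos ⟨hik, hlj⟩] at h4
      exact hWij this

end Stmt4Core


open Finset Submodule

namespace Stmt4Build

open scoped Classical

variable {E : Type} [NormedAddCommGroup E] [InnerProductSpace ℝ E] [FiniteDimensional ℝ E]
variable {ι : Type} [LinearOrder ι] [DecidableEq ι]

local notation "⟪" x ", " y "⟫" => @inner ℝ _ _ x y

/-- inner product with everything in a span vanishes -/
lemma span_inner_right (x : E) (s : Set E) (h : ∀ y ∈ s, ⟪x, y⟫ = 0) :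
    ∀ z ∈ span ℝ s, ⟪x, z⟫ = 0 := by
  intro z hz
  induction hz using Submodule.span_induction with
  | mem y hy => exact h y hy
  | zero => exact inner_zero_right x
  | add y z _ _ hy hz => rw [inner_add_right, hy, hz]; ring
  | smul a y _ hy => rw [real_inner_smul_right, hy]; ring

lemma span_inner_left (x : E) (s : Set E) (h : ∀ y ∈ s, ⟪y, x⟫ = 0) :
    ∀ z ∈ span ℝ s, ⟪z, x⟫ = 0 := by
  intro z hz
  rw [real_inner_comm]
  exact span_inner_right x s (fun y hy => by rw [real_inner_comm]; exact h y hy) z hz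

lemma mem_span_of_ortho (s t : Set E) (x : E) (hx : x ∈ span ℝ (s ∪ t))
    (hxt : ∀ y ∈ t, ⟪x, y⟫ = 0) (hst : ∀ p ∈ s, ∀ y ∈ t, ⟪p, y⟫ = 0) :
    x ∈ span ℝ s := by
  rw [Submodule.span_union] at hx
  obtain ⟨p, hp, z, hz, hpz⟩ := Submodule.mem_sup.mp hx
  have h1 : ⟪x, z⟫ = 0 := span_inner_right x t hxt z hz
  have h2 : ⟪p, z⟫ = 0 := by
    apply span_inner_right p t _ z hz
    intro y hy
    exact span_inner_left y s (fun p' hp' => hst p' hp' y hy) p hp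
  have h3 : ⟪z, z⟫ = 0 := by
    have hzxp : z = x - p := by rw [← hpz]; abel
    calc ⟪z, z⟫ = ⟪x, z⟫ - ⟪p, z⟫ := by
          rw [hzxp, inner_sub_left]
      _ = 0 := by rw [h1, h2]; ring
  have : z = 0 := inner_self_eq_zero.mp h3
  rw [← hpz, this, add_zero]
  exact hp

lemma finrank_span_finset (S : Finset ι) (u : ι → E)
    (hu : ∀ i ∈ S, ∀ j ∈ S, ⟪u i, u j⟫ = if i = j then 1 else 0) :
    Module.finrank ℝ (span ℝ (u '' (S : Set ι))) = S.card := by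
  have horth : Orthonormal ℝ (fun x : (S : Set ι) => u x) := by
    rw [orthonormal_iff_ite]
    intro i j
    rw [hu i i.2 j j.2]
    by_cases h : (i : ι) = (j : ι)
    · simp [h, Subtype.ext h]
    · rw [if_neg h, if_neg (fun hh => h (congrArg Subtype.val hh))]
  have : u '' (S : Set ι) = Set.range (fun x : (S : Set ι) => u x) := by
    rw [← Set.image_eq_range]
  rw [this, finrank_span_eq_card horth.linearIndependent]
  simp

end Stmt4Build

namespace Stmt4Build

variable {E : Type} [NormedAddCommGroup E] [InnerProductSpace ℝ E] [FiniteDimensional ℝ E]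
variable {ι : Type} [LinearOrder ι] [DecidableEq ι]

local notation "⟪" x ", " y "⟫" => @inner ℝ _ _ x y

def Hyp (S : Finset ι) (u v : ι → E) (lam mu : ι → ℝ) : Prop :=
  (∀ i ∈ S, ∀ j ∈ S, ⟪u i, u j⟫ = if i = j then 1 else 0) ∧
  (∀ i ∈ S, ∀ j ∈ S, ⟪v i, v j⟫ = if i = j then 1 else 0) ∧
  span ℝ (u '' (S : Set ι)) = span ℝ (v '' (S : Set ι)) ∧
  (∀ i ∈ S, ∀ j ∈ S, i ≤ j → lam j ≤ lam i) ∧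
  (∀ i ∈ S, ∀ j ∈ S, i ≤ j → mu j ≤ mu i) ∧
  (∀ i ∈ S, ∀ j ∈ S, ⟪u i, v j⟫ ≠ 0 → ∃ m ∈ S, lam m = lam i ∧ mu m = mu j)

def GoodQ (S : Finset ι) (u v : ι → E) (lam mu : ι → ℝ) : Prop :=
  ∃ q : ι → E,
    (∀ i ∈ S, ∀ j ∈ S, ⟪q i, q j⟫ = if i = j then 1 else 0) ∧
    (∀ i ∈ S, q i ∈ span ℝ (u '' {k : ι | k ∈ S ∧ lam k = lam i}) ∧
              q i ∈ span ℝ (v '' {k : ι | k ∈ S ∧ mu k = mu i}))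

lemma Hyp.swap {S : Finset ι} {u v : ι → E} {lam mu : ι → ℝ} (h : Hyp S u v lam mu) :
    Hyp S v u mu lam := by
  obtain ⟨hu, hv, hspan, hlam, hmu, hpat⟩ := h
  exact ⟨hv, hu, hspan.symm, hmu, hlam, fun i hi j hj hne => by
    obtain ⟨m, hm, h1, h2⟩ := hpat j hj i hi (by rwa [real_inner_comm] at hne)
    exact ⟨m, hm, h2, h1⟩⟩

lemma GoodQ.swap {S : Finset ι} {u v : ι → E} {lam mu : ι → ℝ} (h : GoodQ S v u mu lam) :
    GoodQ S u v lam mu := by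
  obtain ⟨q, h1, h2⟩ := h
  exact ⟨q, h1, fun i hi => ⟨(h2 i hi).2, (h2 i hi).1⟩⟩

theorem peel (S : Finset ι) (hS : S.Nonempty) (u v : ι → E) (lam mu : ι → ℝ)
    (h : Hyp S u v lam mu)
    (hqs : (S.filter (fun k => lam k = lam (S.min' hS))).card
        ≤ (S.filter (fun k => mu k = mu (S.min' hS))).card)
    (IH : ∀ S' : Finset ι, S'.card < S.card →
      ∀ (u' v' : ι → E) (lam' mu' : ι → ℝ), Hyp S' u' v' lam' mu' → GoodQ S' u' v' lam' mu') :
    GoodQ S u v lam mu := by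
  obtain ⟨hu, hv, hspan, hlam, hmu, hpat⟩ := h
  set i₀ := S.min' hS with hi₀
  set Tl := S.filter (fun k => lam k = lam i₀) with hTl
  set Tm := S.filter (fun k => mu k = mu i₀) with hTm
  have hi₀S : i₀ ∈ S := S.min'_mem hS
  have hi₀Tl : i₀ ∈ Tl := by simp [hTl, hi₀S]
  have hi₀Tm : i₀ ∈ Tm := by simp [hTm, hi₀S]
  have hTlS : Tl ⊆ S := Finset.filter_subset _ _
  have hTmS : Tm ⊆ S := Finset.filter_subset _ _
  have memTl : ∀ k, k ∈ Tl ↔ k ∈ S ∧ lam k = lam i₀ := by intro k; simp [hTl]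
  have memTm : ∀ k, k ∈ Tm ↔ k ∈ S ∧ mu k = mu i₀ := by intro k; simp [hTm]
  -- down-closedness
  have hTl_dc : ∀ i ∈ Tl, ∀ j ∈ S, j ≤ i → j ∈ Tl := by
    intro i hi j hj hji
    obtain ⟨hiS, hilam⟩ := (memTl i).mp hi
    have h1 : lam i ≤ lam j := hlam j hj i hiS hji
    have h2 : lam j ≤ lam i₀ := hlam i₀ hi₀S j hj (S.min'_le j hj)
    exact (memTl j).mpr ⟨hj, le_antisymm h2 (hilam ▸ h1)⟩
  -- Tl ⊆ Tm
  have hTlTm : Tl ⊆ Tm := by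
    intro i hi
    by_contra hiTm
    have hiS := hTlS hi
    have hsub : Tm ⊆ Tl.erase i := by
      intro j hj
      obtain ⟨hjS, hjmu⟩ := (memTm j).mp hj
      have hji : j ≤ i ∧ j ≠ i := by
        constructor
        · by_contra hij
          push_neg at hij
          have h2 : mu j ≤ mu i := hmu i hiS j hjS (le_of_lt hij)
          have h3 : mu i ≤ mu i₀ := hmu i₀ hi₀S i hiS (S.min'_le i hiS)
          exact hiTm ((memTm i).mpr ⟨hiS, le_antisymm h3 (by rw [← hjmu]; exact h2)⟩)
        · intro hji; exact hiTm (hji ▸ hj)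
      exact Finset.mem_erase.mpr ⟨hji.2, hTl_dc i hi j hjS hji.1⟩
    have hcard := Finset.card_le_card hsub
    rw [Finset.card_erase_of_mem hi] at hcard
    have : 0 < Tl.card := Finset.card_pos.mpr ⟨i, hi⟩
    omega
  -- key orthogonality: top λ-block ⊥ v's outside top μ-block
  have key0 : ∀ i ∈ Tl, ∀ j ∈ S, j ∉ Tm → ⟪u i, v j⟫ = 0 := by
    intro i hi j hj hjTm
    by_contra hne
    obtain ⟨m, hmS, h1, h2⟩ := hpat i (hTlS hi) j hj hne
    have hmTl : m ∈ Tl := (memTl m).mpr ⟨hmS, h1.trans ((memTl i).mp hi).2⟩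
    have hmTm := hTlTm hmTl
    exact hjTm ((memTm j).mpr ⟨hj, h2 ▸ ((memTm m).mp hmTm).2⟩)
  -- subspaces
  set U : Submodule ℝ E := span ℝ (u '' (Tl : Set ι)) with hU
  set V1 : Submodule ℝ E := span ℝ (v '' (Tm : Set ι)) with hV1
  set Wsp : Submodule ℝ E := span ℝ (u '' (S : Set ι)) with hWsp
  have hsplitS : (Tm : Set ι) ∪ ((S \ Tm : Finset ι) : Set ι) = (S : Set ι) := by
    rw [← Finset.coe_union, Finset.union_sdiff_of_subset hTmS]
  have vSm_orth : ∀ i ∈ Tl, ∀ y ∈ v '' ((S \ Tm : Finset ι) : Set ι), ⟪u i, y⟫ = 0 := by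
    intro i hi y hy
    obtain ⟨j, hj, rfl⟩ := hy
    rw [Finset.coe_sdiff] at hj
    exact key0 i hi j hj.1 hj.2
  have uTl_mem_V1 : ∀ i ∈ Tl, u i ∈ V1 := by
    intro i hi
    apply mem_span_of_ortho (v '' (Tm : Set ι)) (v '' ((S \ Tm : Finset ι) : Set ι))
    · rw [← Set.image_union, hsplitS, ← hspan]
      exact subset_span (Set.mem_image_of_mem u (hTlS hi))
    · exact vSm_orth i hi
    · intro p hp y hy
      obtain ⟨a, ha, rfl⟩ := hp
      obtain ⟨b, hb, rfl⟩ := hy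
      rw [Finset.coe_sdiff] at hb
      have hab : a ≠ b := fun hab => (hab ▸ hb.2) ha
      rw [hv a (hTmS ha) b hb.1, if_neg hab]
  have hUV1 : U ≤ V1 := by
    rw [hU, Submodule.span_le]
    rintro x ⟨i, hi, rfl⟩
    exact uTl_mem_V1 i hi
  -- ranks
  have hrankU : Module.finrank ℝ U = Tl.card :=
    finrank_span_finset Tl u (fun i hi j hj => hu i (hTlS hi) j (hTlS hj))
  have hrankV1 : Module.finrank ℝ V1 = Tm.card :=
    finrank_span_finset Tm v (fun i hi j hj => hv i (hTmS hi) j (hTmS hj))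
  have hrankW : Module.finrank ℝ Wsp = S.card := finrank_span_finset S u hu
  set K : Submodule ℝ E := Uᗮ ⊓ V1 with hK
  have hrankK : Module.finrank ℝ K = Tm.card - Tl.card := by
    have h2 : Tl.card + Module.finrank ℝ K = Tm.card := by
      rw [hK, ← hrankU, ← hrankV1]
      exact Submodule.finrank_add_inf_finrank_orthogonal hUV1
    omega
  -- orthonormal basis of K
  set b := stdOrthonormalBasis ℝ K with hb
  have ecard : (Tm \ Tl).card = Module.finrank ℝ K := by
    rw [Finset.card_sdiff_of_subset hTlTm, hrankK]
  set e := Finset.equivFinOfCardEq ecard with he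
  set v' : ι → E := fun j => if h : j ∈ Tm \ Tl then (b (e ⟨j, h⟩) : E) else v j with hv'
  have hv'w : ∀ j (h : j ∈ Tm \ Tl), v' j = (b (e ⟨j, h⟩) : E) := by
    intro j h; rw [hv']; simp [h]
  have hv'K : ∀ j ∈ Tm \ Tl, v' j ∈ K := by
    intro j h; rw [hv'w j h]; exact (b (e ⟨j, h⟩)).2
  have hv'v : ∀ j, j ∉ Tm \ Tl → v' j = v j := by
    intro j h; rw [hv']; simp [h]
  have hv'V1 : ∀ j ∈ Tm \ Tl, v' j ∈ V1 := by
    intro j h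
    have := hv'K j h
    rw [hK] at this
    exact this.2
  have hv'Uo : ∀ j ∈ Tm \ Tl, v' j ∈ Uᗮ := by
    intro j h
    have := hv'K j h
    rw [hK] at this
    exact this.1
  have hv'inner : ∀ i (hi : i ∈ Tm \ Tl), ∀ j (hj : j ∈ Tm \ Tl),
      ⟪v' i, v' j⟫ = if i = j then 1 else 0 := by
    intro i hi j hj
    rw [hv'w i hi, hv'w j hj, ← Submodule.coe_inner,
      orthonormal_iff_ite.mp b.orthonormal]
    by_cases h : i = j
    · subst h; simp
    · rw [if_neg h, if_neg]
      intro hh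
      exact h (Subtype.ext_iff.mp (e.injective hh))
  have spanK : span ℝ (v' '' ((Tm \ Tl : Finset ι) : Set ι)) = K := by
    have himg : v' '' ((Tm \ Tl : Finset ι) : Set ι)
        = Set.range (fun m : Fin (Module.finrank ℝ K) => (b m : E)) := by
      apply Set.eq_of_subset_of_subset
      · rintro x ⟨j, hj, rfl⟩
        rw [Finset.mem_coe] at hj
        rw [hv'w j hj]
        exact ⟨e ⟨j, hj⟩, rfl⟩
      · rintro x ⟨m, rfl⟩
        refine ⟨(e.symm m).1, Finset.mem_coe.mpr (e.symm m).2, ?_⟩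
        rw [hv'w _ (e.symm m).2]
        congr 1
        rw [show (⟨(e.symm m).1, (e.symm m).2⟩ : {x // x ∈ Tm \ Tl}) = e.symm m from rfl,
          e.apply_symm_apply]
    rw [himg]
    have : (fun m : Fin (Module.finrank ℝ K) => (b m : E)) = K.subtype ∘ b := rfl
    rw [this, Set.range_comp, ← Submodule.map_span, ← b.coe_toBasis, b.toBasis.span_eq,
      Submodule.map_subtype_top]
  -- the new index set
  set S' := S \ Tl with hS'
  have hS'S : S' ⊆ S := Finset.sdiff_subset
  have memS' : ∀ k, k ∈ S' ↔ k ∈ S ∧ k ∉ Tl := by intro k; simp [hS']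
  have hcardS' : S'.card < S.card := by
    rw [hS', Finset.card_sdiff_of_subset hTlS]
    have h1 : 0 < Tl.card := Finset.card_pos.mpr ⟨i₀, hi₀Tl⟩
    have h2 := Finset.card_le_card hTlS
    omega
  -- lam on S' differs from lam i₀
  have hlamS' : ∀ i ∈ S', lam i ≠ lam i₀ := by
    intro i hi hh
    exact ((memS' i).mp hi).2 ((memTl i).mpr ⟨((memS' i).mp hi).1, hh⟩)
  -- for j ∈ S', membership in Tm\Tl is equivalent to membership in Tm
  have hTmS' : ∀ j ∈ S', (j ∈ Tm \ Tl ↔ j ∈ Tm) := by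
    intro j hj
    constructor
    · exact fun h => (Finset.mem_sdiff.mp h).1
    · intro h; exact Finset.mem_sdiff.mpr ⟨h, ((memS' j).mp hj).2⟩
  -- u-vectors on S' are orthogonal to U
  have huUo : ∀ i ∈ S', ∀ z ∈ U, ⟪z, u i⟫ = 0 := by
    intro i hi
    apply span_inner_left
    rintro y ⟨m, hm, rfl⟩
    rw [Finset.mem_coe] at hm
    have : m ≠ i := fun hmi => ((memS' i).mp hi).2 (hmi ▸ hm)
    rw [hu m (hTlS hm) i (hS'S hi), if_neg this]
  -- old v-vectors outside Tm are orthogonal to V1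
  have hV1vj : ∀ j ∈ S, j ∉ Tm → ∀ z ∈ V1, ⟪z, v j⟫ = 0 := by
    intro j hj hjTm
    apply span_inner_left
    rintro y ⟨m, hm, rfl⟩
    rw [Finset.mem_coe] at hm
    have : m ≠ j := fun hmj => hjTm (hmj ▸ hm)
    rw [hv m (hTmS hm) j hj, if_neg this]
  -- old v-vectors outside Tm are orthogonal to U
  have hUvj : ∀ j ∈ S, j ∉ Tm → ∀ z ∈ U, ⟪z, v j⟫ = 0 := by
    intro j hj hjTm
    apply span_inner_left
    rintro y ⟨m, hm, rfl⟩
    rw [Finset.mem_coe] at hm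
    exact key0 m hm j hj hjTm
  -- orthonormality of v' on S'
  have hv'' : ∀ i ∈ S', ∀ j ∈ S', ⟪v' i, v' j⟫ = if i = j then 1 else 0 := by
    intro i hi j hj
    by_cases hiTm : i ∈ Tm <;> by_cases hjTm : j ∈ Tm
    · exact hv'inner i ((hTmS' i hi).mpr hiTm) j ((hTmS' j hj).mpr hjTm)
    · have hij : i ≠ j := fun h => hjTm (h ▸ hiTm)
      rw [if_neg hij, hv'v j (fun h => hjTm (Finset.mem_sdiff.mp h).1)]
      exact hV1vj j (hS'S hj) hjTm (v' i) (hv'V1 i ((hTmS' i hi).mpr hiTm))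
    · have hij : i ≠ j := fun h => hiTm (h ▸ hjTm)
      rw [if_neg hij, hv'v i (fun h => hiTm (Finset.mem_sdiff.mp h).1), real_inner_comm]
      exact hV1vj i (hS'S hi) hiTm (v' j) (hv'V1 j ((hTmS' j hj).mpr hjTm))
    · rw [hv'v i (fun h => hiTm (Finset.mem_sdiff.mp h).1),
        hv'v j (fun h => hjTm (Finset.mem_sdiff.mp h).1)]
      exact hv i (hS'S hi) j (hS'S hj)
  -- both spans equal W2
  set W2 : Submodule ℝ E := Uᗮ ⊓ Wsp with hW2
  have hULW : U ≤ Wsp := by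
    rw [hU, hWsp]
    exact Submodule.span_mono (Set.image_mono (by exact_mod_cast hTlS))
  have hrankW2 : Module.finrank ℝ W2 = S.card - Tl.card := by
    have h2 : Tl.card + Module.finrank ℝ W2 = S.card := by
      rw [hW2, ← hrankU, ← hrankW]
      exact Submodule.finrank_add_inf_finrank_orthogonal hULW
    omega
  have hrankS'u : Module.finrank ℝ (span ℝ (u '' (S' : Set ι))) = S'.card :=
    finrank_span_finset S' u (fun i hi j hj => hu i (hS'S hi) j (hS'S hj))
  have hrankS'v : Module.finrank ℝ (span ℝ (v' '' (S' : Set ι))) = S'.card :=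
    finrank_span_finset S' v' hv''
  have hcardS'' : S'.card = S.card - Tl.card := by rw [hS', Finset.card_sdiff_of_subset hTlS]
  have spanU' : span ℝ (u '' (S' : Set ι)) = W2 := by
    apply Submodule.eq_of_le_of_finrank_eq
    · rw [Submodule.span_le]
      rintro x ⟨i, hi, rfl⟩
      rw [Finset.mem_coe] at hi
      refine Submodule.mem_inf.mpr ⟨(Submodule.mem_orthogonal U (u i)).mpr (huUo i hi), ?_⟩
      rw [hWsp]
      exact subset_span (Set.mem_image_of_mem u (hS'S hi))
    · rw [hrankS'u, hrankW2, hcardS'']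
  have hV1W : V1 ≤ Wsp := by
    rw [hV1, hspan]
    exact Submodule.span_mono (Set.image_mono (by exact_mod_cast hTmS))
  have spanV' : span ℝ (v' '' (S' : Set ι)) = W2 := by
    apply Submodule.eq_of_le_of_finrank_eq
    · rw [Submodule.span_le]
      rintro x ⟨j, hj, rfl⟩
      rw [Finset.mem_coe] at hj
      by_cases hjTm : j ∈ Tm
      · exact Submodule.mem_inf.mpr ⟨hv'Uo j ((hTmS' j hj).mpr hjTm),
          hV1W (hv'V1 j ((hTmS' j hj).mpr hjTm))⟩
      · rw [hv'v j (fun h => hjTm (Finset.mem_sdiff.mp h).1)]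
        refine Submodule.mem_inf.mpr ⟨(Submodule.mem_orthogonal U (v j)).mpr
          (hUvj j (hS'S hj) hjTm), ?_⟩
        rw [hspan]
        exact subset_span (Set.mem_image_of_mem v (hS'S hj))
    · rw [hrankS'v, hrankW2, hcardS'']
  -- pattern for the new data
  have hpat' : ∀ i ∈ S', ∀ j ∈ S', ⟪u i, v' j⟫ ≠ 0 →
      ∃ m ∈ S', lam m = lam i ∧ mu m = mu j := by
    intro i hi j hj hne
    have hmS' : ∀ m ∈ S, lam m = lam i → m ∈ S' := by
      intro m hm hml
      refine (memS' m).mpr ⟨hm, fun hmTl => ?_⟩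
      exact hlamS' i hi (by rw [← hml]; exact ((memTl m).mp hmTl).2)
    by_cases hjTm : j ∈ Tm
    · -- v' j lies in V1 = span (v '' Tm)
      have hspanV1 : v' j ∈ V1 := hv'V1 j ((hTmS' j hj).mpr hjTm)
      have : ∃ j' ∈ Tm, ⟪u i, v j'⟫ ≠ 0 := by
        by_contra hall
        push_neg at hall
        apply hne
        apply span_inner_right (u i) (v '' (Tm : Set ι)) _ _ hspanV1
        rintro y ⟨m, hm, rfl⟩
        exact hall m (Finset.mem_coe.mp hm)
      obtain ⟨j', hj', hne'⟩ := this
      obtain ⟨m, hm, h1, h2⟩ := hpat i (hS'S hi) j' (hTmS hj') hne'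
      refine ⟨m, hmS' m hm h1, h1, ?_⟩
      rw [h2, ((memTm j').mp hj').2, ← ((memTm j).mp hjTm).2]
    · rw [hv'v j (fun h => hjTm (Finset.mem_sdiff.mp h).1)] at hne
      obtain ⟨m, hm, h1, h2⟩ := hpat i (hS'S hi) j (hS'S hj) hne
      exact ⟨m, hmS' m hm h1, h1, h2⟩
  -- apply the induction hypothesis
  obtain ⟨q', hq'orth, hq'mem⟩ := IH S' hcardS' u v' lam mu
    ⟨fun i hi j hj => hu i (hS'S hi) j (hS'S hj), hv'',
     spanU'.trans spanV'.symm,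
     fun i hi j hj => hlam i (hS'S hi) j (hS'S hj),
     fun i hi j hj => hmu i (hS'S hi) j (hS'S hj), hpat'⟩
  -- assemble the final family
  refine ⟨fun i => if i ∈ Tl then u i else q' i, ?_, ?_⟩
  · intro i hi j hj
    by_cases hiTl : i ∈ Tl <;> by_cases hjTl : j ∈ Tl <;>
      simp only [hiTl, hjTl, if_true, if_false]
    · exact hu i (hTlS hiTl) j (hTlS hjTl)
    · have hij : i ≠ j := fun h => hjTl (h ▸ hiTl)
      rw [if_neg hij]
      have hjS' : j ∈ S' := (memS' j).mpr ⟨hj, hjTl⟩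
      have hq'span : q' j ∈ span ℝ (u '' (S' : Set ι)) := by
        refine Submodule.span_mono ?_ (hq'mem j hjS').1
        exact Set.image_mono (fun k hk => Finset.mem_coe.mpr hk.1)
      apply span_inner_right (u i) (u '' (S' : Set ι)) _ _ hq'span
      rintro y ⟨m, hm, rfl⟩
      rw [Finset.mem_coe] at hm
      have : i ≠ m := fun h => ((memS' m).mp hm).2 (h ▸ hiTl)
      rw [hu i (hTlS hiTl) m (hS'S hm), if_neg this]
    · have hij : i ≠ j := fun h => hiTl (h ▸ hjTl)
      rw [if_neg hij, real_inner_comm]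
      have hiS' : i ∈ S' := (memS' i).mpr ⟨hi, hiTl⟩
      have hq'span : q' i ∈ span ℝ (u '' (S' : Set ι)) := by
        refine Submodule.span_mono ?_ (hq'mem i hiS').1
        exact Set.image_mono (fun k hk => Finset.mem_coe.mpr hk.1)
      apply span_inner_right (u j) (u '' (S' : Set ι)) _ _ hq'span
      rintro y ⟨m, hm, rfl⟩
      rw [Finset.mem_coe] at hm
      have : j ≠ m := fun h => ((memS' m).mp hm).2 (h ▸ hjTl)
      rw [hu j (hTlS hjTl) m (hS'S hm), if_neg this]
    · exact hq'orth i ((memS' i).mpr ⟨hi, hiTl⟩) j ((memS' j).mpr ⟨hj, hjTl⟩)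
  · intro i hi
    by_cases hiTl : i ∈ Tl <;> simp only [hiTl, if_true, if_false]
    · constructor
      · exact subset_span ⟨i, ⟨hi, rfl⟩, rfl⟩
      · -- u i ∈ V1 and V1 ≤ span (v '' μ-class of i)
        have hiTm : i ∈ Tm := hTlTm hiTl
        have hcls : (v '' (Tm : Set ι)) ⊆ v '' {k : ι | k ∈ S ∧ mu k = mu i} := by
          apply Set.image_mono
          intro k hk
          rw [Finset.mem_coe] at hk
          exact ⟨hTmS hk, ((memTm k).mp hk).2.trans (((memTm i).mp hiTm).2).symm⟩
        exact Submodule.span_mono hcls (uTl_mem_V1 i hiTl)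
    · have hiS' : i ∈ S' := (memS' i).mpr ⟨hi, hiTl⟩
      constructor
      · refine Submodule.span_mono ?_ (hq'mem i hiS').1
        apply Set.image_mono
        intro k hk
        exact ⟨hS'S hk.1, hk.2⟩
      · -- translate the v'-span into a v-span
        refine Submodule.span_le.mpr ?_ (hq'mem i hiS').2
        rintro x ⟨k, ⟨hkS', hkmu⟩, rfl⟩
        by_cases hkTm : k ∈ Tm
        · have h1 : v' k ∈ V1 := hv'V1 k ((hTmS' k hkS').mpr hkTm)
          have hcls : (v '' (Tm : Set ι)) ⊆ v '' {m : ι | m ∈ S ∧ mu m = mu i} := by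
            apply Set.image_mono
            intro m hm
            rw [Finset.mem_coe] at hm
            exact ⟨hTmS hm, ((memTm m).mp hm).2.trans
              (by rw [← hkmu, ((memTm k).mp hkTm).2])⟩
          exact Submodule.span_mono hcls h1
        · rw [hv'v k (fun h => hkTm (Finset.mem_sdiff.mp h).1)]
          exact subset_span ⟨k, ⟨hS'S hkS', hkmu⟩, rfl⟩

end Stmt4Build

namespace Stmt4Build

open scoped Classical

variable {E : Type} [NormedAddCommGroup E] [InnerProductSpace ℝ E] [FiniteDimensional ℝ E]
variable {ι : Type} [LinearOrder ι] [DecidableEq ι]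

local notation "⟪" x ", " y "⟫" => @inner ℝ _ _ x y

lemma goodQ_empty (u v : ι → E) (lam mu : ι → ℝ) : GoodQ (∅ : Finset ι) u v lam mu := by
  refine ⟨u, ?_, ?_⟩
  · intro i hi; simp at hi
  · intro i hi; simp at hi

theorem build_aux : ∀ (n : ℕ) (S : Finset ι), S.card ≤ n →
    ∀ (u v : ι → E) (lam mu : ι → ℝ), Hyp S u v lam mu → GoodQ S u v lam mu := by
  intro n
  induction n with
  | zero =>
      intro S hcard u v lam mu _
      rw [Nat.le_zero, Finset.card_eq_zero] at hcard
      subst hcard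
      exact goodQ_empty u v lam mu
  | succ m ihm =>
      intro S hcard u v lam mu h
      rcases S.eq_empty_or_nonempty with rfl | hS
      · exact goodQ_empty u v lam mu
      · by_cases hqs : (S.filter (fun k => lam k = lam (S.min' hS))).card
            ≤ (S.filter (fun k => mu k = mu (S.min' hS))).card
        · exact peel S hS u v lam mu h hqs
            (fun S' hlt u' v' lam' mu' h' => ihm S' (by omega) u' v' lam' mu' h')
        · exact GoodQ.swap (peel S hS v u mu lam h.swap (le_of_not_ge hqs)
            (fun S' hlt u' v' lam' mu' h' => ihm S' (by omega) u' v' lam' mu' h'))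

theorem build (S : Finset ι) (u v : ι → E) (lam mu : ι → ℝ) (h : Hyp S u v lam mu) :
    GoodQ S u v lam mu :=
  build_aux S.card S le_rfl u v lam mu h

end Stmt4Build


open Matrix Finset

namespace Stmt4Main

variable {N : ℕ}

lemma conj_sub_smul (P : Matrix (Fin N) (Fin N) ℝ) (hP : P * Pᵀ = 1)
    (f : Fin N → ℝ) (c : ℝ) :
    P * diagonal f * Pᵀ - c • 1 = P * diagonal (fun i => f i - c) * Pᵀ := by
  have h1 : (c • 1 : Matrix (Fin N) (Fin N) ℝ) = P * (c • (1 : Matrix (Fin N) (Fin N) ℝ)) * Pᵀ := by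
    rw [Matrix.mul_smul, Matrix.mul_one, Matrix.smul_mul, hP]
  rw [h1, ← Matrix.sub_mul, ← Matrix.mul_sub, Matrix.smul_one_eq_diagonal, Matrix.diagonal_sub]

lemma posdef_entries (P : Matrix (Fin N) (Fin N) ℝ) (hP' : Pᵀ * P = 1)
    (f : Fin N → ℝ) (h : (P * diagonal f * Pᵀ).PosDef) : ∀ i, 0 < f i := by
  intro i
  set x : Fin N → ℝ := fun k => P k i with hxdef
  have hPP : (Pᵀ * P) i i = (1 : ℝ) := by rw [hP', Matrix.one_apply_eq]
  have hsum : ∑ k, P k i * P k i = 1 := by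
    rw [← hPP, Matrix.mul_apply]
    apply Finset.sum_congr rfl
    intro k _
    rw [Matrix.transpose_apply]
  have hxne : x ≠ 0 := by
    intro h0
    have h1 : (1:ℝ) = 0 := by
      rw [← hsum]
      apply Finset.sum_eq_zero
      intro k _
      rw [show P k i = 0 from congrFun h0 k, mul_zero]
    norm_num at h1
  have h2 := h.dotProduct_mulVec_pos hxne
  have hx : x = P.mulVec (Pi.single i 1) := by
    funext k
    simp [Matrix.mulVec_single, hxdef]
  have h3 : star x ⬝ᵥ ((P * diagonal f * Pᵀ) *ᵥ x) = f i := by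
    have hstar : star x = x := by funext k; simp [hxdef]
    have hvec : (P * diagonal f * Pᵀ) *ᵥ x = fun k => (P * diagonal f) k i * 1 := by
      rw [hx, Matrix.mulVec_mulVec, show P * diagonal f * Pᵀ * P = P * diagonal f by
        rw [Matrix.mul_assoc (P * diagonal f), hP', Matrix.mul_one], Matrix.mulVec_single]
      rfl
    rw [hstar, hvec, dotProduct]
    have hterm : ∀ k, x k * ((P * diagonal f) k i * 1) = (P k i * P k i) * f i := by
      intro k
      rw [Matrix.mul_diagonal, hxdef]
      ring
    rw [Finset.sum_congr rfl (fun k _ => hterm k), ← Finset.sum_mul, hsum, one_mul]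
  rw [h3] at h2
  exact h2

lemma inv_formula (P : Matrix (Fin N) (Fin N) ℝ) (hP : P * Pᵀ = 1) (hP' : Pᵀ * P = 1)
    (f : Fin N → ℝ) (hf : ∀ i, f i ≠ 0) :
    (P * diagonal f * Pᵀ)⁻¹ = P * diagonal (fun i => (f i)⁻¹) * Pᵀ := by
  apply Matrix.inv_eq_right_inv
  calc P * diagonal f * Pᵀ * (P * diagonal (fun i => (f i)⁻¹) * Pᵀ)
      = P * diagonal f * (Pᵀ * P) * diagonal (fun i => (f i)⁻¹) * Pᵀ := by
        simp only [Matrix.mul_assoc]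
    _ = P * (diagonal f * diagonal (fun i => (f i)⁻¹)) * Pᵀ := by
        rw [hP', Matrix.mul_one]
        simp only [Matrix.mul_assoc]
    _ = 1 := by
        rw [Matrix.diagonal_mul_diagonal]
        have : (fun i => f i * (f i)⁻¹) = fun _ => (1:ℝ) := by
          funext i; exact mul_inv_cancel₀ (hf i)
        rw [this, Matrix.diagonal_one, Matrix.mul_one, hP]

lemma trace_formula (P R : Matrix (Fin N) (Fin N) ℝ) (hP' : Pᵀ * P = 1)
    (e f : Fin N → ℝ) :
    ((P * diagonal e * Pᵀ) * (R * diagonal f * Rᵀ) * (P * diagonal e * Pᵀ)).trace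
      = ∑ i, ∑ j, e i * ((Pᵀ * R) i j * f j * (Pᵀ * R) i j) * e i := by
  set S := Pᵀ * R with hSdef
  have hRP : Rᵀ * P = Sᵀ := by rw [hSdef, Matrix.transpose_mul, Matrix.transpose_transpose]
  have hmat : (P * diagonal e * Pᵀ) * (R * diagonal f * Rᵀ) * (P * diagonal e * Pᵀ)
      = P * (diagonal e * S * diagonal f * Sᵀ * diagonal e) * Pᵀ := by
    rw [hSdef]
    simp only [Matrix.mul_assoc]
    rw [← Matrix.mul_assoc Rᵀ P, hRP, hSdef]
  rw [hmat, Matrix.trace_mul_cycle, ← Matrix.mul_assoc, hP', Matrix.one_mul]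
  rw [Matrix.trace]
  apply Finset.sum_congr rfl
  intro i _
  rw [Matrix.diag]
  have h1 : (diagonal e * S * diagonal f * Sᵀ * diagonal e) i i
      = e i * (S * diagonal f * Sᵀ) i i * e i := by
    rw [Matrix.mul_diagonal]
    congr 1
    rw [show diagonal e * S * diagonal f * Sᵀ = diagonal e * (S * diagonal f * Sᵀ) by
      simp only [Matrix.mul_assoc], Matrix.diagonal_mul]
  rw [h1]
  have h2 : (S * diagonal f * Sᵀ) i i = ∑ j, S i j * f j * S i j := by
    rw [Matrix.mul_apply]
    apply Finset.sum_congr rfl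
    intro j _
    rw [Matrix.mul_diagonal, Matrix.transpose_apply]
  rw [h2, Finset.mul_sum, Finset.sum_mul]

end Stmt4Main

/-- Optimality-Commutativity Lemma: trace lower bound for
`(A-a₁I)⁻¹(B-b₁I)(A-a₁I)⁻¹` in terms of oppositely-ordered eigenvalues, with
equality forcing commutation and simultaneous diagonalization. -/
theorem stmt4 {N : ℕ} (A B P R : Matrix (Fin N) (Fin N) ℝ) (a₁ b₁ : ℝ)
    (hA : A.IsSymm) (hB : B.IsSymm)
    (hApos : (A - a₁ • (1 : Matrix (Fin N) (Fin N) ℝ)).PosDef)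
    (hBpos : (B - b₁ • (1 : Matrix (Fin N) (Fin N) ℝ)).PosDef)
    (lam mu : Fin N → ℝ) (hlam : Antitone lam) (hmu : Antitone mu)
    (hP : P * Pᵀ = 1) (hP' : Pᵀ * P = 1)
    (hR : R * Rᵀ = 1) (hR' : Rᵀ * R = 1)
    (hAdiag : A = P * Matrix.diagonal lam * Pᵀ)
    (hBdiag : B = R * Matrix.diagonal mu * Rᵀ) :
    (∑ i : Fin N, (mu i - b₁) / (lam i - a₁) ^ 2)
      ≤ ((A - a₁ • 1)⁻¹ * (B - b₁ • 1) * (A - a₁ • 1)⁻¹).trace ∧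
    (((A - a₁ • 1)⁻¹ * (B - b₁ • 1) * (A - a₁ • 1)⁻¹).trace
        = ∑ i : Fin N, (mu i - b₁) / (lam i - a₁) ^ 2 →
      A * B = B * A ∧ ∃ Q : Matrix (Fin N) (Fin N) ℝ,
        Q * Qᵀ = 1 ∧ Qᵀ * Q = 1 ∧ Qᵀ * A * Q = Matrix.diagonal lam ∧
        Qᵀ * B * Q = Matrix.diagonal mu) := by

  have hMA : A - a₁ • 1 = P * diagonal (fun i => lam i - a₁) * Pᵀ := by
    rw [hAdiag]; exact Stmt4Main.conj_sub_smul P hP lam a₁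
  have hMB : B - b₁ • 1 = R * diagonal (fun i => mu i - b₁) * Rᵀ := by
    rw [hBdiag]; exact Stmt4Main.conj_sub_smul R hR mu b₁
  have hf1 : ∀ i, 0 < lam i - a₁ :=
    Stmt4Main.posdef_entries P hP' _ (by rw [← hMA]; exact hApos)
  have hf2 : ∀ i, 0 < mu i - b₁ :=
    Stmt4Main.posdef_entries R hR' _ (by rw [← hMB]; exact hBpos)
  have hinv : (A - a₁ • 1)⁻¹ = P * diagonal (fun i => (lam i - a₁)⁻¹) * Pᵀ := by
    rw [hMA]; exact Stmt4Main.inv_formula P hP hP' _ (fun i => ne_of_gt (hf1 i))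
  set SS := Pᵀ * R with hSSdef
  have htr : ((A - a₁ • 1)⁻¹ * (B - b₁ • 1) * (A - a₁ • 1)⁻¹).trace
      = ∑ i, ∑ j, (lam i - a₁)⁻¹ * (SS i j * (mu j - b₁) * SS i j) * (lam i - a₁)⁻¹ := by
    rw [hinv, hMB]
    exact Stmt4Main.trace_formula P R hP' _ _
  have hSS1 : SS * SSᵀ = 1 := by
    rw [hSSdef, Matrix.transpose_mul, Matrix.transpose_transpose, Matrix.mul_assoc,
      ← Matrix.mul_assoc R Rᵀ P, hR, Matrix.one_mul, hP']
  have hSS2 : SSᵀ * SS = 1 := by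
    rw [hSSdef, Matrix.transpose_mul, Matrix.transpose_transpose, Matrix.mul_assoc,
      ← Matrix.mul_assoc P Pᵀ R, hP, Matrix.one_mul, hR']
  -- ℕ-indexed data for the combinatorial core
  set W' : ℕ → ℕ → ℝ := fun i j =>
    if h : i < N ∧ j < N then (SS ⟨i, h.1⟩ ⟨j, h.2⟩)^2 else 0 with hW'
  set c' : ℕ → ℝ := fun i => if h : i < N then ((lam ⟨i, h⟩ - a₁)^2)⁻¹ else 0 with hc'
  set d' : ℕ → ℝ := fun j => if h : j < N then mu ⟨j, h⟩ - b₁ else 0 with hd'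
  have conv1 : ∀ (g : Fin N → ℝ),
      ∑ i ∈ range N, (if h : i < N then g ⟨i, h⟩ else 0) = ∑ i, g i := by
    intro g
    rw [← Fin.sum_univ_eq_sum_range (fun i => if h : i < N then g ⟨i, h⟩ else 0) N]
    apply Finset.sum_congr rfl
    intro i _
    rw [dif_pos i.isLt]
  have hW0 : ∀ i j, i < N → j < N → 0 ≤ W' i j := by
    intro i j hi hj
    simp only [hW']
    rw [dif_pos (show i < N ∧ j < N from ⟨hi, hj⟩)]
    exact sq_nonneg _
  have hrow : ∀ i, i < N → ∑ j ∈ range N, W' i j = 1 := by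
    intro i hi
    have h0 : ∀ j ∈ range N, W' i j
        = (if h : j < N then (fun j' : Fin N => (SS ⟨i, hi⟩ j')^2) ⟨j, h⟩ else 0) := by
      intro j hj
      simp only [hW']
      rw [dif_pos (show i < N ∧ j < N from ⟨hi, mem_range.mp hj⟩), dif_pos (mem_range.mp hj)]
    rw [Finset.sum_congr rfl h0, conv1 (fun j' : Fin N => (SS ⟨i, hi⟩ j')^2)]
    have h1 : (SS * SSᵀ) ⟨i, hi⟩ ⟨i, hi⟩ = 1 := by rw [hSS1, Matrix.one_apply_eq]
    rw [← h1, Matrix.mul_apply]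
    apply Finset.sum_congr rfl
    intro j _
    rw [Matrix.transpose_apply, pow_two]
  have hcol : ∀ j, j < N → ∑ i ∈ range N, W' i j = 1 := by
    intro j hj
    have h0 : ∀ i ∈ range N, W' i j
        = (if h : i < N then (fun i' : Fin N => (SS i' ⟨j, hj⟩)^2) ⟨i, h⟩ else 0) := by
      intro i hi
      simp only [hW']
      rw [dif_pos (show i < N ∧ j < N from ⟨mem_range.mp hi, hj⟩), dif_pos (mem_range.mp hi)]
    rw [Finset.sum_congr rfl h0, conv1 (fun i' : Fin N => (SS i' ⟨j, hj⟩)^2)]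
    have h1 : (SSᵀ * SS) ⟨j, hj⟩ ⟨j, hj⟩ = 1 := by rw [hSS2, Matrix.one_apply_eq]
    rw [← h1, Matrix.mul_apply]
    apply Finset.sum_congr rfl
    intro i _
    rw [Matrix.transpose_apply, pow_two]
  have hcmono : ∀ i j, i ≤ j → j < N → c' i ≤ c' j := by
    intro i j hij hj
    have hi : i < N := lt_of_le_of_lt hij hj
    simp only [hc']
    rw [dif_pos hi, dif_pos hj]
    have hlamij : lam ⟨j, hj⟩ ≤ lam ⟨i, hi⟩ := hlam (by exact hij)
    have h1 : 0 < lam ⟨j, hj⟩ - a₁ := hf1 _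
    have h2 : 0 < lam ⟨i, hi⟩ - a₁ := hf1 _
    apply inv_anti₀ (pow_pos h1 2)
    apply pow_le_pow_left₀ (le_of_lt h1)
    linarith
  have hdanti : ∀ i j, i ≤ j → j < N → d' j ≤ d' i := by
    intro i j hij hj
    have hi : i < N := lt_of_le_of_lt hij hj
    simp only [hd']
    rw [dif_pos hi, dif_pos hj]
    have := hmu (show (⟨i, hi⟩ : Fin N) ≤ ⟨j, hj⟩ by exact hij)
    linarith
  -- conversion of the double sum
  have conv2 : ∀ (g : Fin N → Fin N → ℝ),
      ∑ i ∈ range N, ∑ j ∈ range N,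
          (if h : i < N ∧ j < N then g ⟨i, h.1⟩ ⟨j, h.2⟩ else 0)
        = ∑ i, ∑ j, g i j := by
    intro g
    have h0 : ∀ i ∈ range N,
        ∑ j ∈ range N, (if h : i < N ∧ j < N then g ⟨i, h.1⟩ ⟨j, h.2⟩ else 0)
          = (if h : i < N then (fun i' : Fin N => ∑ j, g i' j) ⟨i, h⟩ else 0) := by
      intro i hi
      have hiN := mem_range.mp hi
      rw [dif_pos hiN]
      beta_reduce
      rw [← conv1 (g ⟨i, hiN⟩)]
      apply Finset.sum_congr rfl
      intro j hj
      have hjN := mem_range.mp hj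
      rw [dif_pos ⟨hiN, hjN⟩, dif_pos hjN]
    rw [Finset.sum_congr rfl h0, conv1 (fun i' : Fin N => ∑ j, g i' j)]
  have hterm : ∀ i j : ℕ, W' i j * (c' i * d' j)
      = (if h : i < N ∧ j < N then
          (SS ⟨i, h.1⟩ ⟨j, h.2⟩)^2 * (((lam ⟨i, h.1⟩ - a₁)^2)⁻¹ * (mu ⟨j, h.2⟩ - b₁))
        else 0) := by
    intro i j
    by_cases h : i < N ∧ j < N
    · simp only [hW', hc', hd']
      rw [dif_pos h, dif_pos h, dif_pos h.1, dif_pos h.2]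
    · simp only [hW', hc', hd']
      rw [dif_neg h, dif_neg h, zero_mul]
  have htr2 : ((A - a₁ • 1)⁻¹ * (B - b₁ • 1) * (A - a₁ • 1)⁻¹).trace
      = ∑ i ∈ range N, ∑ j ∈ range N, W' i j * (c' i * d' j) := by
    rw [htr]
    have := conv2 (fun i j => (SS i j)^2 * (((lam i - a₁)^2)⁻¹ * (mu j - b₁)))
    rw [show (∑ i ∈ range N, ∑ j ∈ range N, W' i j * (c' i * d' j))
        = ∑ i ∈ range N, ∑ j ∈ range N,
            (if h : i < N ∧ j < N then
              (SS ⟨i, h.1⟩ ⟨j, h.2⟩)^2 * (((lam ⟨i, h.1⟩ - a₁)^2)⁻¹ * (mu ⟨j, h.2⟩ - b₁))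
            else 0) from
      Finset.sum_congr rfl fun i _ => Finset.sum_congr rfl fun j _ => hterm i j, this]
    apply Finset.sum_congr rfl
    intro i _
    apply Finset.sum_congr rfl
    intro j _
    rw [pow_two (lam i - a₁), mul_inv, pow_two (SS i j)]
    ring
  have htarget : (∑ i : Fin N, (mu i - b₁) / (lam i - a₁) ^ 2)
      = ∑ i ∈ range N, c' i * d' i := by
    rw [← conv1 (fun i => (mu i - b₁) / (lam i - a₁)^2)]
    apply Finset.sum_congr rfl
    intro i hi
    have hiN := mem_range.mp hi
    simp only [hc', hd']
    rw [dif_pos hiN, dif_pos hiN, dif_pos hiN, div_eq_mul_inv, mul_comm]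
  obtain ⟨hineq, hpateq⟩ := Stmt4Core.core N W' c' d' hW0 hrow hcol hcmono hdanti
  constructor
  · rw [htarget, htr2]
    exact hineq
  · intro heq
    have heqN : ∑ i ∈ range N, ∑ j ∈ range N, W' i j * (c' i * d' j)
        = ∑ i ∈ range N, c' i * d' i := by
      rw [← htr2, heq, htarget]
    have hpat0 := hpateq heqN
    have hpattern : ∀ i j : Fin N, SS i j ≠ 0 →
        ∃ m : Fin N, lam m = lam i ∧ mu m = mu j := by
      intro i j hne
      have hW'ne : W' (i : ℕ) (j : ℕ) ≠ 0 := by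
        simp only [hW']
        rw [dif_pos (show (i:ℕ) < N ∧ (j:ℕ) < N from ⟨i.isLt, j.isLt⟩), Fin.eta, Fin.eta]
        exact pow_ne_zero 2 hne
      obtain ⟨m, hm, hceq, hdeq⟩ := hpat0 i j i.isLt j.isLt hW'ne
      refine ⟨⟨m, hm⟩, ?_, ?_⟩
      · simp only [hc'] at hceq
        rw [dif_pos hm, dif_pos i.isLt, Fin.eta] at hceq
        have h2 : (lam ⟨m, hm⟩ - a₁)^2 = (lam i - a₁)^2 := inv_inj.mp hceq
        have hfac : (lam ⟨m, hm⟩ - a₁ - (lam i - a₁)) * (lam ⟨m, hm⟩ - a₁ + (lam i - a₁)) = 0 := by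
          linear_combination h2
        rcases mul_eq_zero.mp hfac with h | h
        · linarith
        · have := hf1 ⟨m, hm⟩
          have := hf1 i
          linarith
      · simp only [hd'] at hdeq
        rw [dif_pos hm, dif_pos j.isLt, Fin.eta] at hdeq
        linarith
    -- set up the geometric data in EuclideanSpace
    set u : Fin N → EuclideanSpace ℝ (Fin N) := fun i => WithLp.toLp 2 (fun k => P k i) with hu_def
    set v : Fin N → EuclideanSpace ℝ (Fin N) := fun j => WithLp.toLp 2 (fun k => R k j) with hv_def
    have hinner : ∀ (x y : EuclideanSpace ℝ (Fin N)),
        (inner ℝ x y) = ∑ k, x k * y k := by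
      intro x y
      rw [PiLp.inner_apply]
      apply Finset.sum_congr rfl
      intro k _
      rw [RCLike.inner_apply, conj_trivial, mul_comm]
    have hu_inner : ∀ i ∈ (univ : Finset (Fin N)), ∀ j ∈ (univ : Finset (Fin N)),
        (inner ℝ (u i) (u j)) = if i = j then 1 else 0 := by
      intro i _ j _
      rw [hinner]
      have h1 : ∑ k, (u i) k * (u j) k = (Pᵀ * P) i j := by
        rw [Matrix.mul_apply]
        apply Finset.sum_congr rfl
        intro k _
        rw [Matrix.transpose_apply, hu_def]
      rw [h1, hP', Matrix.one_apply]
    have hv_inner : ∀ i ∈ (univ : Finset (Fin N)), ∀ j ∈ (univ : Finset (Fin N)),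
        (inner ℝ (v i) (v j)) = if i = j then 1 else 0 := by
      intro i _ j _
      rw [hinner]
      have h1 : ∑ k, (v i) k * (v j) k = (Rᵀ * R) i j := by
        rw [Matrix.mul_apply]
        apply Finset.sum_congr rfl
        intro k _
        rw [Matrix.transpose_apply, hv_def]
      rw [h1, hR', Matrix.one_apply]
    have hspan_u : Submodule.span ℝ (u '' ((univ : Finset (Fin N)) : Set (Fin N))) = ⊤ := by
      apply Submodule.eq_top_of_finrank_eq
      rw [Stmt4Build.finrank_span_finset univ u hu_inner, Finset.card_univ, Fintype.card_fin,
        finrank_euclideanSpace_fin]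
    have hspan_v : Submodule.span ℝ (v '' ((univ : Finset (Fin N)) : Set (Fin N))) = ⊤ := by
      apply Submodule.eq_top_of_finrank_eq
      rw [Stmt4Build.finrank_span_finset univ v hv_inner, Finset.card_univ, Fintype.card_fin,
        finrank_euclideanSpace_fin]
    have huv_inner : ∀ i j : Fin N, (inner ℝ (u i) (v j)) = SS i j := by
      intro i j
      rw [hinner, hSSdef, Matrix.mul_apply]
      apply Finset.sum_congr rfl
      intro k _
      rw [Matrix.transpose_apply, hu_def, hv_def]
    obtain ⟨q, hqorth, hqmem⟩ := Stmt4Build.build univ u v lam mu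
      ⟨hu_inner, hv_inner, hspan_u.trans hspan_v.symm,
       fun i _ j _ hij => hlam hij, fun i _ j _ hij => hmu hij,
       fun i _ j _ hne => by
        obtain ⟨m, h1, h2⟩ := hpattern i j (by rwa [huv_inner] at hne)
        exact ⟨m, Finset.mem_univ m, h1, h2⟩⟩
    -- build the orthogonal matrix
    set Q : Matrix (Fin N) (Fin N) ℝ := Matrix.of (fun k i => q i k) with hQdef
    have hqinner : ∀ i j : Fin N, ∑ k, q i k * q j k = if i = j then 1 else 0 := by
      intro i j
      rw [← hinner]
      exact hqorth i (Finset.mem_univ i) j (Finset.mem_univ j)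
    have hQQ : Qᵀ * Q = 1 := by
      ext i j
      rw [Matrix.mul_apply, Matrix.one_apply, ← hqinner i j]
      apply Finset.sum_congr rfl
      intro k _
      rw [Matrix.transpose_apply, hQdef, Matrix.of_apply, Matrix.of_apply]
    have hQ1 : Q * Qᵀ = 1 := mul_eq_one_comm.mp hQQ
    -- eigenvector property in the plain pi world
    have heig : ∀ (M : Matrix (Fin N) (Fin N) ℝ) (w : Fin N → EuclideanSpace ℝ (Fin N))
        (nu : Fin N → ℝ),
        (∀ m : Fin N, M.mulVec (w m) = nu m • (w m : Fin N → ℝ)) →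
        ∀ (i : Fin N) (x : EuclideanSpace ℝ (Fin N)),
          x ∈ Submodule.span ℝ (w '' {k : Fin N | k ∈ (univ : Finset (Fin N)) ∧ nu k = nu i}) →
          M.mulVec x = nu i • (x : Fin N → ℝ) := by
      intro M w nu hw i x hx
      have hle : Submodule.span ℝ (w '' {k : Fin N | k ∈ (univ : Finset (Fin N)) ∧ nu k = nu i})
          ≤ Submodule.comap ((WithLp.linearEquiv 2 ℝ (Fin N → ℝ)).toLinearMap)
              (LinearMap.ker (M.mulVecLin - nu i • LinearMap.id)) := by
        rw [Submodule.span_le]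
        rintro y ⟨m, ⟨_, hmnu⟩, rfl⟩
        simp only [SetLike.mem_coe, Submodule.mem_comap, LinearMap.mem_ker, LinearMap.sub_apply,
          LinearMap.smul_apply, LinearMap.id_apply]
        refine sub_eq_zero.mpr ?_
        show M.mulVec (w m) = nu i • (w m : Fin N → ℝ)
        rw [hw m, hmnu]
      have := hle hx
      simp only [SetLike.mem_coe, Submodule.mem_comap, LinearMap.mem_ker, LinearMap.sub_apply,
        LinearMap.smul_apply, LinearMap.id_apply] at this
      exact sub_eq_zero.mp this
    have hAu : ∀ m : Fin N, A.mulVec (u m) = lam m • (u m : Fin N → ℝ) := by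
      intro m
      funext k
      have hAP : A * P = P * diagonal lam := by
        rw [hAdiag, Matrix.mul_assoc, hP', Matrix.mul_one]
      have h1 : A.mulVec (u m) k = (A * P) k m := by
        rw [Matrix.mul_apply, Matrix.mulVec, dotProduct]
      have h2 : (A * P) k m = lam m * P k m := by
        rw [hAP, Matrix.mul_diagonal]; ring
      have h3 : (lam m • (u m : Fin N → ℝ)) k = lam m * P k m := rfl
      rw [h1, h2, h3]
    have hBv : ∀ m : Fin N, B.mulVec (v m) = mu m • (v m : Fin N → ℝ) := by
      intro m
      funext k
      have hBR : B * R = R * diagonal mu := by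
        rw [hBdiag, Matrix.mul_assoc, hR', Matrix.mul_one]
      have h1 : B.mulVec (v m) k = (B * R) k m := by
        rw [Matrix.mul_apply, Matrix.mulVec, dotProduct]
      have h2 : (B * R) k m = mu m * R k m := by
        rw [hBR, Matrix.mul_diagonal]; ring
      have h3 : (mu m • (v m : Fin N → ℝ)) k = mu m * R k m := rfl
      rw [h1, h2, h3]
    have hAq : ∀ j : Fin N, A.mulVec (q j) = lam j • (q j : Fin N → ℝ) :=
      fun j => heig A u lam hAu j (q j) (hqmem j (Finset.mem_univ j)).1
    have hBq : ∀ j : Fin N, B.mulVec (q j) = mu j • (q j : Fin N → ℝ) :=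
      fun j => heig B v mu hBv j (q j) (hqmem j (Finset.mem_univ j)).2
    have hQM : ∀ (M : Matrix (Fin N) (Fin N) ℝ) (nu : Fin N → ℝ),
        (∀ j : Fin N, M.mulVec (q j) = nu j • (q j : Fin N → ℝ)) →
        Qᵀ * M * Q = diagonal nu := by
      intro M nu hM
      ext i j
      rw [Matrix.mul_assoc, Matrix.mul_apply]
      have h1 : ∀ k, (M * Q) k j = M.mulVec (q j) k := by
        intro k
        rw [Matrix.mul_apply, Matrix.mulVec, dotProduct]
        rfl
      have h2 : ∀ k, Qᵀ i k * (M * Q) k j = q i k * (nu j * q j k) := by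
        intro k
        rw [h1, hM j]
        show Q k i * (nu j • (q j : Fin N → ℝ)) k = q i k * (nu j * q j k)
        rw [Pi.smul_apply, smul_eq_mul, hQdef, Matrix.of_apply]
      rw [Finset.sum_congr rfl (fun k _ => h2 k)]
      have h3 : ∑ k, q i k * (nu j * q j k) = nu j * ∑ k, q i k * q j k := by
        rw [Finset.mul_sum]
        apply Finset.sum_congr rfl
        intro k _
        ring
      rw [h3, hqinner i j, Matrix.diagonal_apply]
      by_cases h : i = j
      · subst h; simp
      · simp [h]
    have hQA : Qᵀ * A * Q = diagonal lam := hQM A lam hAq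
    have hQB : Qᵀ * B * Q = diagonal mu := hQM B mu hBq
    have hA' : A = Q * diagonal lam * Qᵀ := by
      calc A = (Q * Qᵀ) * A * (Q * Qᵀ) := by rw [hQ1, Matrix.one_mul, Matrix.mul_one]
        _ = Q * (Qᵀ * A * Q) * Qᵀ := by simp only [Matrix.mul_assoc]
        _ = Q * diagonal lam * Qᵀ := by rw [hQA]
    have hB' : B = Q * diagonal mu * Qᵀ := by
      calc B = (Q * Qᵀ) * B * (Q * Qᵀ) := by rw [hQ1, Matrix.one_mul, Matrix.mul_one]
        _ = Q * (Qᵀ * B * Q) * Qᵀ := by simp only [Matrix.mul_assoc]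
        _ = Q * diagonal mu * Qᵀ := by rw [hQB]
    have hcomm_aux : ∀ f g : Fin N → ℝ,
        (Q * diagonal f * Qᵀ) * (Q * diagonal g * Qᵀ) = Q * diagonal (fun i => f i * g i) * Qᵀ := by
      intro f g
      calc (Q * diagonal f * Qᵀ) * (Q * diagonal g * Qᵀ)
          = Q * (diagonal f * (Qᵀ * (Q * (diagonal g * Qᵀ)))) := by simp only [Matrix.mul_assoc]
        _ = Q * (diagonal f * (diagonal g * Qᵀ)) := by
            rw [← Matrix.mul_assoc Qᵀ Q (diagonal g * Qᵀ), hQQ, Matrix.one_mul]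
        _ = Q * diagonal (fun i => f i * g i) * Qᵀ := by
            rw [← Matrix.mul_assoc (diagonal f) (diagonal g) Qᵀ, Matrix.diagonal_mul_diagonal]
            simp only [Matrix.mul_assoc]
    constructor
    · rw [hA', hB', hcomm_aux, hcomm_aux]
      have hfg : (fun i => lam i * mu i) = (fun i => mu i * lam i) := by
        funext i; ring
      rw [hfg]
    · exact ⟨Q, hQ1, hQQ, hQA, hQB⟩
end

section
/- Let 0 < a₁ < a₂, 0 < b₁ ≤ b₂, θ_A ∈ [0,1), θ_B ∈ [0,1]. Let a̲ = (θ_A/a₁ + (1−θ_A)/a₂)^{-1} and ā = a₁θ_A + a₂(1−θ_A) be the harmonic and arithmetic means, and set L₁^# = a̲²[ b₂/a₂² + (b₁−b₂)θ_B/a₂² + b₁(1/a₁² − 1/a₂²)θ_A ]. Then the identity (L₁^# − b₁)·(ā − a₁)²/(a̲ − a₁)² = (b₂ − b₁)(1 − θ_B) + (b₁/a₁²)(a₂ − a₁)² θ_A (1 − θ_A) holds. -/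
/-- The simple laminate saturates the lower trace bound L1: algebraic identity
`(L₁^# − b₁)(ā−a₁)²/(a̲−a₁)² = (b₂−b₁)(1−θ_B) + (b₁/a₁²)(a₂−a₁)²θ_A(1−θ_A)`. -/
theorem stmt9 (a₁ a₂ b₁ b₂ θA θB au ab L1 : ℝ)
    (ha₁ : 0 < a₁) (ha : a₁ < a₂) (hb₁ : 0 < b₁) (hb : b₁ ≤ b₂)
    (hθA0 : 0 ≤ θA) (hθA1 : θA < 1) (hθB : θB ∈ Set.Icc (0:ℝ) 1)
    (hau : au = (θA / a₁ + (1 - θA) / a₂)⁻¹)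
    (hab : ab = a₁ * θA + a₂ * (1 - θA))
    (hL1 : L1 = au ^ 2 * (b₂ / a₂ ^ 2 + (b₁ - b₂) * θB / a₂ ^ 2
      + b₁ * (1 / a₁ ^ 2 - 1 / a₂ ^ 2) * θA)) :
    (L1 - b₁) * (ab - a₁) ^ 2 / (au - a₁) ^ 2
      = (b₂ - b₁) * (1 - θB) + (b₁ / a₁ ^ 2) * (a₂ - a₁) ^ 2 * θA * (1 - θA) := by
  have ha₂ : (0:ℝ) < a₂ := ha₁.trans ha
  have hauv : au = a₁ * a₂ / (θA * a₂ + (1 - θA) * a₁) := by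
    rw [hau, div_add_div _ _ (ne_of_gt ha₁) (ne_of_gt ha₂), inv_div]
    ring_nf
  have hden : 0 < θA * a₂ + (1 - θA) * a₁ := by nlinarith
  have hden' : a₂ * θA + a₁ * (1 - θA) ≠ 0 := by nlinarith
  have hdiff : au - a₁ = a₁ * (1 - θA) * (a₂ - a₁) / (θA * a₂ + (1 - θA) * a₁) := by
    rw [hauv]; field_simp; ring
  have hne : au - a₁ ≠ 0 := by
    rw [hdiff]
    exact ne_of_gt (div_pos (mul_pos (mul_pos ha₁ (by linarith)) (by linarith)) hden)
  rw [div_eq_iff (pow_ne_zero 2 hne)]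
  subst hab hL1
  rw [hdiff, hauv]
  field_simp
  ring
end

section
/- Let N ≥ 1, 0 < a₁ < a₂, θ ∈ (0,1). Let e₁,…,e_p ∈ ℝ^N be unit vectors and m₁,…,m_p ≥ 0 with Σ_{i=1}^p m_i = 1. Define the symmetric matrix A* by A* = a₁I + (1−θ)·[ (a₂−a₁)^{-1} I + (θ/a₁) Σ_{i=1}^p m_i e_i ⊗ e_i ]^{-1}. Then: (i) A* is well defined and A* − a₁I is symmetric positive definite; (ii) A* ≤ (a₁θ + a₂(1−θ)) I; and (iii) tr (A* − a₁I)^{-1} = N/((1−θ)(a₂−a₁)) + θ/((1−θ)a₁), i.e. A* achieves equality in the optimal lower trace bound for two-phase effective tensors. -/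
open Matrix

section helpers
variable {N : ℕ}

lemma psd_smul {r : ℝ} (hr : 0 ≤ r) {M : Matrix (Fin N) (Fin N) ℝ}
    (hM : M.PosSemidef) : (r • M).PosSemidef := by
  refine posSemidef_iff_dotProduct_mulVec.mpr ⟨?_, fun x => ?_⟩
  · unfold Matrix.IsHermitian
    rw [conjTranspose_smul, hM.1.eq]
    simp
  · rw [smul_mulVec, dotProduct_smul, smul_eq_mul]
    exact mul_nonneg hr (hM.dotProduct_mulVec_nonneg x)

lemma pd_smul {r : ℝ} (hr : 0 < r) {M : Matrix (Fin N) (Fin N) ℝ}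
    (hM : M.PosDef) : (r • M).PosDef := by
  refine posDef_iff_dotProduct_mulVec.mpr ⟨?_, fun x hx => ?_⟩
  · unfold Matrix.IsHermitian
    rw [conjTranspose_smul, hM.1.eq]
    simp
  · rw [smul_mulVec, dotProduct_smul, smul_eq_mul]
    exact mul_pos hr (hM.dotProduct_mulVec_pos hx)

lemma psd_vecMulVec (v : Fin N → ℝ) : (vecMulVec v v).PosSemidef := by
  refine posSemidef_iff_dotProduct_mulVec.mpr ⟨?_, fun x => ?_⟩
  · ext i j
    simp [conjTranspose_apply, vecMulVec_apply, mul_comm]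
  · have h : vecMulVec v v *ᵥ x = (v ⬝ᵥ x) • v := by
      ext i
      simp [mulVec, vecMulVec_apply, dotProduct, Finset.mul_sum, mul_comm, mul_left_comm, mul_assoc]
    rw [h]
    simp only [star_trivial, dotProduct_smul, smul_eq_mul]
    have : x ⬝ᵥ v = v ⬝ᵥ x := dotProduct_comm _ _
    rw [this]
    exact mul_self_nonneg _

lemma pd_one : (1 : Matrix (Fin N) (Fin N) ℝ).PosDef := Matrix.PosDef.one

end helpers

/-- The rank-p sequential laminate `A* = a₁I + (1−θ)[(a₂−a₁)⁻¹I + (θ/a₁)Σ mᵢ eᵢ⊗eᵢ]⁻¹`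
is well defined, satisfies `a₁I < A* ≤ āI` and achieves equality in the optimal
lower trace bound. -/
theorem stmt14 {N p : ℕ} (hN : 1 ≤ N) (a₁ a₂ θ : ℝ)
    (ha₁ : 0 < a₁) (ha : a₁ < a₂) (hθ : θ ∈ Set.Ioo (0:ℝ) 1)
    (e : Fin p → Fin N → ℝ) (he : ∀ i, e i ⬝ᵥ e i = 1)
    (m : Fin p → ℝ) (hm : ∀ i, 0 ≤ m i) (hmsum : ∑ i, m i = 1)
    (K A : Matrix (Fin N) (Fin N) ℝ)
    (hK : K = (a₂ - a₁)⁻¹ • (1 : Matrix (Fin N) (Fin N) ℝ)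
        + (θ / a₁) • ∑ i, m i • vecMulVec (e i) (e i))
    (hA : A = a₁ • (1 : Matrix (Fin N) (Fin N) ℝ) + (1 - θ) • K⁻¹) :
    IsUnit K ∧
    (A - a₁ • (1 : Matrix (Fin N) (Fin N) ℝ)).PosDef ∧
    ((a₁ * θ + a₂ * (1 - θ)) • (1 : Matrix (Fin N) (Fin N) ℝ) - A).PosSemidef ∧
    ((A - a₁ • (1 : Matrix (Fin N) (Fin N) ℝ))⁻¹).trace
      = (N : ℝ) / ((1 - θ) * (a₂ - a₁)) + θ / ((1 - θ) * a₁) := by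
  obtain ⟨hθ0, hθ1⟩ := hθ
  have hc : (0:ℝ) < a₂ - a₁ := sub_pos.mpr ha
  have hs : (0:ℝ) < θ / a₁ := div_pos hθ0 ha₁
  have h1θ : (0:ℝ) < 1 - θ := sub_pos.mpr hθ1
  set S : Matrix (Fin N) (Fin N) ℝ := ∑ i, m i • vecMulVec (e i) (e i) with hSdef
  have hS : S.PosSemidef := by
    rw [hSdef]
    refine Finset.sum_induction _ _ (fun a b ha hb => ha.add hb) Matrix.PosSemidef.zero
      (fun i _ => psd_smul (hm i) (psd_vecMulVec (e i)))
  have hKpd : K.PosDef := by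
    rw [hK]
    exact (pd_smul (inv_pos.mpr hc) pd_one).add_posSemidef (psd_smul hs.le hS)
  have hKunit : IsUnit K := hKpd.isUnit
  have hKdet : IsUnit K.det := (Matrix.isUnit_iff_isUnit_det K).mp hKunit
  have hKK : K⁻¹ * K = 1 := Matrix.nonsing_inv_mul K hKdet
  have hKK' : K * K⁻¹ = 1 := Matrix.mul_nonsing_inv K hKdet
  have hAsub : A - a₁ • (1 : Matrix (Fin N) (Fin N) ℝ) = (1 - θ) • K⁻¹ := by
    rw [hA]; abel
  have hKinvpd : K⁻¹.PosDef := hKpd.inv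
  refine ⟨hKunit, ?_, ?_, ?_⟩
  · rw [hAsub]; exact pd_smul h1θ hKinvpd
  · -- middle claim
    have hM : (θ / a₁) • S + ((a₂ - a₁) * (θ / a₁)^2) • (S * S)
        = (a₂ - a₁) • (K * K) - K := by
      rw [hK]
      rw [add_mul, mul_add, mul_add]
      rw [smul_mul_smul_comm, smul_mul_smul_comm, smul_mul_smul_comm, smul_mul_smul_comm]
      rw [one_mul, mul_one, one_mul]
      rw [smul_add, smul_add, smul_add, smul_smul, smul_smul, smul_smul, smul_smul]
      have e1 : (a₂ - a₁) * ((a₂ - a₁)⁻¹ * (a₂ - a₁)⁻¹) = (a₂-a₁)⁻¹ := by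
        field_simp
      have e2 : (a₂ - a₁) * ((a₂ - a₁)⁻¹ * (θ / a₁)) = θ / a₁ := by field_simp
      have e3 : (a₂ - a₁) * (θ / a₁ * (a₂ - a₁)⁻¹) = θ / a₁ := by field_simp
      have e4 : (a₂ - a₁) * (θ / a₁ * (θ / a₁)) = (a₂ - a₁) * (θ / a₁)^2 := by ring
      rw [e1, e2, e3, e4]
      abel
    have hMps : ((θ / a₁) • S + ((a₂ - a₁) * (θ / a₁)^2) • (S * S)).PosSemidef := by
      refine (psd_smul hs.le hS).add (psd_smul ?_ ?_)
      · positivity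
      · have := Matrix.posSemidef_conjTranspose_mul_self S
        rwa [hS.1.eq] at this
    have hKinvH : K⁻¹ᴴ = K⁻¹ := hKinvpd.1.eq
    have hconj : (K⁻¹ * ((θ / a₁) • S + ((a₂ - a₁) * (θ / a₁)^2) • (S * S)) * K⁻¹ᴴ).PosSemidef :=
      hMps.mul_mul_conjTranspose_same K⁻¹
    rw [hM, hKinvH] at hconj
    have hid : K⁻¹ * ((a₂ - a₁) • (K * K) - K) * K⁻¹
        = (a₂ - a₁) • (1 : Matrix (Fin N) (Fin N) ℝ) - K⁻¹ := by
      rw [mul_sub, sub_mul, mul_smul_comm, smul_mul_assoc]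
      rw [← Matrix.mul_assoc K⁻¹ K K, hKK, Matrix.one_mul, hKK', Matrix.one_mul]
    rw [hid] at hconj
    have hgoal : (a₁ * θ + a₂ * (1 - θ)) • (1 : Matrix (Fin N) (Fin N) ℝ) - A
        = (1 - θ) • ((a₂ - a₁) • (1 : Matrix (Fin N) (Fin N) ℝ) - K⁻¹) := by
      rw [hA]; module
    rw [hgoal]
    exact psd_smul h1θ.le hconj
  · -- trace
    have hinv : (A - a₁ • (1 : Matrix (Fin N) (Fin N) ℝ))⁻¹ = (1 - θ)⁻¹ • K := by
      rw [hAsub]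
      refine Matrix.inv_eq_right_inv ?_
      rw [smul_mul_smul_comm, hKK, mul_inv_cancel₀ h1θ.ne']
      simp
    rw [hinv, trace_smul]
    have htrS : S.trace = 1 := by
      rw [hSdef, trace_sum]
      have : ∀ i, (m i • vecMulVec (e i) (e i)).trace = m i := by
        intro i
        rw [trace_smul]
        have : (vecMulVec (e i) (e i)).trace = e i ⬝ᵥ e i := by
          simp [Matrix.trace, Matrix.diag, vecMulVec_apply, dotProduct]
        rw [this, he i]
        simp
      simp only [this, hmsum]
    have htrK : K.trace = (a₂ - a₁)⁻¹ * N + θ / a₁ := by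
      rw [hK, trace_add, trace_smul, trace_smul, htrS, trace_one]
      simp [smul_eq_mul]
    rw [htrK, smul_eq_mul]
    have h1 : (1-θ) ≠ 0 := h1θ.ne'
    have h2 : (a₂ - a₁) ≠ 0 := hc.ne'
    field_simp
end

section
/- Let I ⊂ ℝ be a bounded open interval, and let 0 < a₁ ≤ a₂ and 0 < b₁ ≤ b₂. Let (a_n), (b_n) be sequences of measurable functions on I with a₁ ≤ a_n ≤ a₂ and b₁ ≤ b_n ≤ b₂ pointwise. Suppose 1/a_n ⇀ α, b_n/a_n² ⇀ β, and 1/b_n ⇀ γ in the weak* topology of L^∞(I). Then α(x)² ≤ β(x)γ(x) for almost every x ∈ I. In particular, defining a̲ = 1/α, b^# = a̲²β and b̲ = 1/γ, one has b^# ≥ b̲ almost everywhere. -/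
open MeasureTheory Filter Metric Topology

lemma cs_integral {X : Type*} [MeasurableSpace X] {μ : Measure X} {f g : X → ℝ}
    (hf : MemLp f 2 μ) (hg : MemLp g 2 μ) :
    (∫ x, f x * g x ∂μ) ^ 2 ≤ (∫ x, f x ^ 2 ∂μ) * (∫ x, g x ^ 2 ∂μ) := by
  set F := hf.toLp f with hF
  set G := hg.toLp g with hG
  have e1 : ∫ x, f x * g x ∂μ = inner (𝕜 := ℝ) F G := by
    rw [MeasureTheory.L2.inner_def]
    apply integral_congr_ae
    filter_upwards [hf.coeFn_toLp, hg.coeFn_toLp] with x hx hy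
    simp [hF, hG, hx, hy, RCLike.inner_apply, mul_comm]
  have e2 : ∫ x, f x ^ 2 ∂μ = inner (𝕜 := ℝ) F F := by
    rw [MeasureTheory.L2.inner_def]
    apply integral_congr_ae
    filter_upwards [hf.coeFn_toLp] with x hx
    simp [hF, hx, RCLike.inner_apply, sq]
  have e3 : ∫ x, g x ^ 2 ∂μ = inner (𝕜 := ℝ) G G := by
    rw [MeasureTheory.L2.inner_def]
    apply integral_congr_ae
    filter_upwards [hg.coeFn_toLp] with x hx
    simp [hG, hx, RCLike.inner_apply, sq]
  rw [e1, e2, e3, sq]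
  exact real_inner_mul_inner_self_le F G

lemma cs_n (s : Set ℝ) (μ : Measure ℝ) [IsFiniteMeasure μ]
    (a₁ a₂ b₁ b₂ : ℝ) (ha₁ : 0 < a₁) (hb₁ : 0 < b₁)
    (an bn : ℝ → ℝ) (han : Measurable an) (hbn : Measurable bn)
    (hab : ∀ x, a₁ ≤ an x ∧ an x ≤ a₂) (hbb : ∀ x, b₁ ≤ bn x ∧ bn x ≤ b₂) :
    (∫ x in s, (an x)⁻¹ ∂μ) ^ 2
      ≤ (∫ x in s, bn x / (an x) ^ 2 ∂μ) * (∫ x in s, (bn x)⁻¹ ∂μ) := by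
  have hapos : ∀ x, 0 < an x := fun x => lt_of_lt_of_le ha₁ (hab x).1
  have hbpos : ∀ x, 0 < bn x := fun x => lt_of_lt_of_le hb₁ (hbb x).1
  have hspos : ∀ x, 0 < Real.sqrt (bn x) := fun x => Real.sqrt_pos.2 (hbpos x)
  set f : ℝ → ℝ := fun x => Real.sqrt (bn x) * (an x)⁻¹ with hf
  set g : ℝ → ℝ := fun x => (Real.sqrt (bn x))⁻¹ with hg
  have hfm : Measurable f := (Real.continuous_sqrt.measurable.comp hbn).mul han.inv
  have hgm : Measurable g := (Real.continuous_sqrt.measurable.comp hbn).inv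
  have hfb : ∀ x, |f x| ≤ Real.sqrt b₂ / a₁ := by
    intro x
    rw [abs_of_nonneg (mul_nonneg (Real.sqrt_nonneg _) (inv_nonneg.2 (hapos x).le)),
      div_eq_mul_inv]
    exact mul_le_mul (Real.sqrt_le_sqrt (hbb x).2)
      (inv_anti₀ ha₁ (hab x).1) (inv_nonneg.2 (hapos x).le) (Real.sqrt_nonneg _)
  have hgb : ∀ x, |g x| ≤ (Real.sqrt b₁)⁻¹ := by
    intro x
    rw [abs_of_nonneg (inv_nonneg.2 (Real.sqrt_nonneg _))]
    exact inv_anti₀ (Real.sqrt_pos.2 hb₁) (Real.sqrt_le_sqrt (hbb x).1)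
  have hfL : MemLp f 2 (μ.restrict s) :=
    MemLp.of_bound hfm.aestronglyMeasurable _
      (Eventually.of_forall fun x => (Real.norm_eq_abs _).trans_le (hfb x))
  have hgL : MemLp g 2 (μ.restrict s) :=
    MemLp.of_bound hgm.aestronglyMeasurable _
      (Eventually.of_forall fun x => (Real.norm_eq_abs _).trans_le (hgb x))
  have := cs_integral hfL hgL
  have e1 : ∀ x, f x * g x = (an x)⁻¹ := by
    intro x
    rw [hf, hg]
    dsimp only
    rw [mul_right_comm, mul_inv_cancel₀ (hspos x).ne', one_mul]
  have e2 : ∀ x, f x ^ 2 = bn x / (an x) ^ 2 := by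
    intro x
    rw [hf]
    dsimp only
    rw [mul_pow, Real.sq_sqrt (hbpos x).le, div_eq_mul_inv, inv_pow]
  have e3 : ∀ x, g x ^ 2 = (bn x)⁻¹ := by
    intro x
    rw [hg]
    dsimp only
    rw [inv_pow, Real.sq_sqrt (hbpos x).le]
  simp only [e1, e2, e3] at this
  exact this

lemma bdd_integrable {X : Type*} [MeasurableSpace X] {μ : Measure X} [IsFiniteMeasure μ]
    {F : X → ℝ} (C : ℝ) (hm : AEStronglyMeasurable F μ) (hb : ∀ x, |F x| ≤ C) :
    Integrable F μ :=
  (integrable_const C).mono' hm (Eventually.of_forall fun x => (Real.norm_eq_abs _ ▸ hb x))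

lemma indicator_mul (s : Set ℝ) (F : ℝ → ℝ) :
    (fun x => F x * s.indicator (fun _ => (1:ℝ)) x) = s.indicator F := by
  ext x
  by_cases hx : x ∈ s <;> simp [hx]

lemma integral_mul_indicator (I s : Set ℝ) (hs : MeasurableSet s) (G : ℝ → ℝ) :
    ∫ x in I, G x * s.indicator (fun _ => (1:ℝ)) x
      = ∫ x in s, G x ∂(volume.restrict I) := by
  rw [show (fun x => G x * s.indicator (fun _ => (1:ℝ)) x) = s.indicator G from
    indicator_mul s G, integral_indicator hs]

lemma weak_lim_setIntegral (c d : ℝ) (F : ℕ → ℝ → ℝ) (L : ℝ → ℝ)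
    (h : ∀ φ : ℝ → ℝ, IntegrableOn φ (Set.Ioo c d) →
        Tendsto (fun n => ∫ x in Set.Ioo c d, F n x * φ x) atTop
          (nhds (∫ x in Set.Ioo c d, L x * φ x)))
    (s : Set ℝ) (hs : MeasurableSet s) :
    Tendsto (fun n => ∫ x in s, F n x ∂(volume.restrict (Set.Ioo c d))) atTop
      (nhds (∫ x in s, L x ∂(volume.restrict (Set.Ioo c d)))) := by
  have hφ : IntegrableOn (s.indicator fun _ => (1:ℝ)) (Set.Ioo c d) := by
    refine bdd_integrable 1 ((measurable_const.indicator hs).aestronglyMeasurable) ?_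
    intro x; by_cases hx : x ∈ s <;> simp [hx]
  have := h _ hφ
  simp only [integral_mul_indicator _ s hs] at this
  exact this

lemma weak_lim_bounds (c d : ℝ) (hcd : c < d) (m M : ℝ) (hm : 0 < m)
    (F : ℕ → ℝ → ℝ) (L : ℝ → ℝ)
    (hFm : ∀ n, Measurable (F n)) (hF : ∀ n x, m ≤ F n x ∧ F n x ≤ M)
    (h : ∀ φ : ℝ → ℝ, IntegrableOn φ (Set.Ioo c d) →
        Tendsto (fun n => ∫ x in Set.Ioo c d, F n x * φ x) atTop
          (nhds (∫ x in Set.Ioo c d, L x * φ x))) :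
    IntegrableOn L (Set.Ioo c d) ∧
      (∀ᵐ x ∂(volume.restrict (Set.Ioo c d)), m ≤ L x ∧ L x ≤ M) := by
  haveI : IsFiniteMeasure (volume.restrict (Set.Ioo c d)) := by
    constructor
    rw [Measure.restrict_apply_univ, Real.volume_Ioo]
    exact ENNReal.ofReal_lt_top
  have hFi : ∀ n, Integrable (F n) (volume.restrict (Set.Ioo c d)) := fun n =>
    bdd_integrable M ((hFm n).aestronglyMeasurable)
      (fun x => abs_le.2 ⟨by linarith [(hF n x).1, (hF n x).2], (hF n x).2⟩)
  have hset := weak_lim_setIntegral c d F L h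
  have hlow : ∀ (s : Set ℝ), MeasurableSet s →
      m * ((volume.restrict (Set.Ioo c d)) s).toReal
        ≤ ∫ x in s, L x ∂(volume.restrict (Set.Ioo c d)) := by
    intro s hs
    apply ge_of_tendsto' (hset s hs)
    intro n
    calc m * ((volume.restrict (Set.Ioo c d)) s).toReal
        = ∫ _ in s, m ∂(volume.restrict (Set.Ioo c d)) := by
          rw [setIntegral_const, smul_eq_mul, mul_comm, measureReal_def]
      _ ≤ ∫ x in s, F n x ∂(volume.restrict (Set.Ioo c d)) := by
          apply setIntegral_mono_on (integrable_const m).integrableOn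
            (hFi n).integrableOn hs
          intro x _; exact (hF n x).1
  have hhigh : ∀ (s : Set ℝ), MeasurableSet s →
      ∫ x in s, L x ∂(volume.restrict (Set.Ioo c d))
        ≤ M * ((volume.restrict (Set.Ioo c d)) s).toReal := by
    intro s hs
    apply le_of_tendsto' (hset s hs)
    intro n
    calc ∫ x in s, F n x ∂(volume.restrict (Set.Ioo c d))
        ≤ ∫ _ in s, M ∂(volume.restrict (Set.Ioo c d)) := by
          apply setIntegral_mono_on (hFi n).integrableOn
            (integrable_const M).integrableOn hs
          intro x _; exact (hF n x).2
      _ = M * ((volume.restrict (Set.Ioo c d)) s).toReal := by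
          rw [setIntegral_const, smul_eq_mul, mul_comm, measureReal_def]
  have hLi : Integrable L (volume.restrict (Set.Ioo c d)) := by
    by_contra hnot
    have h0 : ∫ x in Set.univ, L x ∂(volume.restrict (Set.Ioo c d)) = 0 := by
      rw [Measure.restrict_univ]; exact integral_undef hnot
    have := hlow Set.univ MeasurableSet.univ
    rw [h0, Measure.restrict_apply_univ, Real.volume_Ioo] at this
    have hpos : 0 < m * (ENNReal.ofReal (d - c)).toReal := by
      apply mul_pos hm
      rw [ENNReal.toReal_ofReal (by linarith)]
      linarith
    linarith
  refine ⟨hLi, ?_⟩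
  have h1 : ∀ᵐ x ∂(volume.restrict (Set.Ioo c d)), m ≤ L x := by
    refine ae_le_of_forall_setIntegral_le (integrable_const m) hLi ?_
    intro s hs hμs
    calc ∫ _ in s, m ∂(volume.restrict (Set.Ioo c d))
        = m * ((volume.restrict (Set.Ioo c d)) s).toReal := by
          rw [setIntegral_const, smul_eq_mul, mul_comm, measureReal_def]
      _ ≤ _ := hlow s hs
  have h2 : ∀ᵐ x ∂(volume.restrict (Set.Ioo c d)), L x ≤ M := by
    refine ae_le_of_forall_setIntegral_le hLi (integrable_const M) ?_
    intro s hs hμs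
    calc ∫ x in s, L x ∂(volume.restrict (Set.Ioo c d))
        ≤ M * ((volume.restrict (Set.Ioo c d)) s).toReal := hhigh s hs
      _ = ∫ _ in s, M ∂(volume.restrict (Set.Ioo c d)) := by
          rw [setIntegral_const, smul_eq_mul, mul_comm, measureReal_def]
  filter_upwards [h1, h2] with x hx1 hx2
  exact ⟨hx1, hx2⟩

lemma leb_diff (f : ℝ → ℝ) (hf : Integrable f (volume : Measure ℝ)) :
    ∀ᵐ x ∂(volume : Measure ℝ),
      Tendsto (fun r => ⨍ y in closedBall x r, f y) (𝓝[>] 0) (𝓝 (f x)) := by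
  filter_upwards [IsUnifLocDoublingMeasure.ae_tendsto_average
    (μ := (volume : Measure ℝ)) hf.locallyIntegrable 1] with x hx
  exact hx (fun _ => x) id tendsto_id
    (by filter_upwards [self_mem_nhdsWithin] with r hr
        exact mem_closedBall_self (by simp only [one_mul]; exact le_of_lt hr))

lemma key_set_ineq (c d : ℝ) (hcd : c < d) (a₁ a₂ b₁ b₂ : ℝ)
    (ha₁ : 0 < a₁) (hb₁ : 0 < b₁)
    (a b : ℕ → ℝ → ℝ) (α β γ : ℝ → ℝ)
    (ham : ∀ n, Measurable (a n)) (hbm : ∀ n, Measurable (b n))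
    (hab : ∀ n x, a₁ ≤ a n x ∧ a n x ≤ a₂)
    (hbb : ∀ n x, b₁ ≤ b n x ∧ b n x ≤ b₂)
    (hα : ∀ φ : ℝ → ℝ, IntegrableOn φ (Set.Ioo c d) →
      Tendsto (fun n => ∫ x in Set.Ioo c d, (a n x)⁻¹ * φ x) atTop
        (nhds (∫ x in Set.Ioo c d, α x * φ x)))
    (hβ : ∀ φ : ℝ → ℝ, IntegrableOn φ (Set.Ioo c d) →
      Tendsto (fun n => ∫ x in Set.Ioo c d, (b n x / (a n x) ^ 2) * φ x) atTop
        (nhds (∫ x in Set.Ioo c d, β x * φ x)))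
    (hγ : ∀ φ : ℝ → ℝ, IntegrableOn φ (Set.Ioo c d) →
      Tendsto (fun n => ∫ x in Set.Ioo c d, (b n x)⁻¹ * φ x) atTop
        (nhds (∫ x in Set.Ioo c d, γ x * φ x)))
    (s : Set ℝ) (hs : MeasurableSet s) :
    (∫ x in s, α x ∂(volume.restrict (Set.Ioo c d))) ^ 2
      ≤ (∫ x in s, β x ∂(volume.restrict (Set.Ioo c d)))
        * (∫ x in s, γ x ∂(volume.restrict (Set.Ioo c d))) := by
  haveI : IsFiniteMeasure (volume.restrict (Set.Ioo c d)) := by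
    constructor
    rw [Measure.restrict_apply_univ, Real.volume_Ioo]
    exact ENNReal.ofReal_lt_top
  have tα := (weak_lim_setIntegral c d _ _ hα s hs).pow 2
  have tβγ := (weak_lim_setIntegral c d _ _ hβ s hs).mul
    (weak_lim_setIntegral c d _ _ hγ s hs)
  refine le_of_tendsto_of_tendsto' tα tβγ ?_
  intro n
  exact cs_n s _ a₁ a₂ b₁ b₂ ha₁ hb₁ (a n) (b n) (ham n) (hbm n)
    (fun x => hab n x) (fun x => hbb n x)


/-- One-dimensional Cauchy–Schwarz for weak* limits: if `1/aₙ ⇀ α`,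
`bₙ/aₙ² ⇀ β`, `1/bₙ ⇀ γ` weak* in `L^∞(I)` for two-phase-type coefficients,
then `α² ≤ βγ` a.e.; in particular `b^# = β/α² ≥ 1/γ = b̲` a.e. -/
theorem stmt16 (c d : ℝ) (hcd : c < d) (a₁ a₂ b₁ b₂ : ℝ)
    (ha₁ : 0 < a₁) (ha : a₁ ≤ a₂) (hb₁ : 0 < b₁) (hb : b₁ ≤ b₂)
    (a b : ℕ → ℝ → ℝ) (α β γ : ℝ → ℝ)
    (ham : ∀ n, Measurable (a n)) (hbm : ∀ n, Measurable (b n))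
    (hab : ∀ n x, a₁ ≤ a n x ∧ a n x ≤ a₂)
    (hbb : ∀ n x, b₁ ≤ b n x ∧ b n x ≤ b₂)
    (hα : ∀ φ : ℝ → ℝ, IntegrableOn φ (Set.Ioo c d) →
      Tendsto (fun n => ∫ x in Set.Ioo c d, (a n x)⁻¹ * φ x) atTop
        (nhds (∫ x in Set.Ioo c d, α x * φ x)))
    (hβ : ∀ φ : ℝ → ℝ, IntegrableOn φ (Set.Ioo c d) →
      Tendsto (fun n => ∫ x in Set.Ioo c d, (b n x / (a n x) ^ 2) * φ x) atTop
        (nhds (∫ x in Set.Ioo c d, β x * φ x)))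
    (hγ : ∀ φ : ℝ → ℝ, IntegrableOn φ (Set.Ioo c d) →
      Tendsto (fun n => ∫ x in Set.Ioo c d, (b n x)⁻¹ * φ x) atTop
        (nhds (∫ x in Set.Ioo c d, γ x * φ x))) :
    ∀ᵐ x ∂(volume.restrict (Set.Ioo c d)),
      α x ^ 2 ≤ β x * γ x ∧ (γ x)⁻¹ ≤ ((α x)⁻¹) ^ 2 * β x := by
  have ha₂ : 0 < a₂ := lt_of_lt_of_le ha₁ ha
  have hb₂ : 0 < b₂ := lt_of_lt_of_le hb₁ hb
  have hapos : ∀ n x, 0 < a n x := fun n x => lt_of_lt_of_le ha₁ (hab n x).1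
  have hbpos : ∀ n x, 0 < b n x := fun n x => lt_of_lt_of_le hb₁ (hbb n x).1
  -- bounds for the three limits
  obtain ⟨hαi, hαae⟩ := weak_lim_bounds c d hcd a₂⁻¹ a₁⁻¹ (inv_pos.2 ha₂) _ α
    (fun n => (ham n).inv)
    (fun n x => ⟨inv_anti₀ (hapos n x) (hab n x).2, inv_anti₀ ha₁ (hab n x).1⟩) hα
  obtain ⟨hβi, hβae⟩ := weak_lim_bounds c d hcd (b₁ / a₂ ^ 2) (b₂ / a₁ ^ 2)
    (div_pos hb₁ (pow_pos ha₂ 2)) _ β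
    (fun n => (hbm n).div ((ham n).pow_const 2))
    (fun n x => ⟨div_le_div₀ (hbpos n x).le (hbb n x).1 (pow_pos (hapos n x) 2)
        (pow_le_pow_left₀ (hapos n x).le (hab n x).2 2),
      div_le_div₀ hb₂.le (hbb n x).2 (pow_pos ha₁ 2)
        (pow_le_pow_left₀ ha₁.le (hab n x).1 2)⟩) hβ
  obtain ⟨hγi, hγae⟩ := weak_lim_bounds c d hcd b₂⁻¹ b₁⁻¹ (inv_pos.2 hb₂) _ γ
    (fun n => (hbm n).inv)
    (fun n x => ⟨inv_anti₀ (hbpos n x) (hbb n x).2, inv_anti₀ hb₁ (hbb n x).1⟩) hγ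
  -- Lebesgue differentiation for the indicator extensions
  have dA := leb_diff _ (hαi.integrable_indicator measurableSet_Ioo)
  have dB := leb_diff _ (hβi.integrable_indicator measurableSet_Ioo)
  have dG := leb_diff _ (hγi.integrable_indicator measurableSet_Ioo)
  filter_upwards [ae_restrict_of_ae dA, ae_restrict_of_ae dB, ae_restrict_of_ae dG,
    ae_restrict_mem measurableSet_Ioo, hαae, hβae, hγae] with x hA hB hG hx hαx hβx hγx
  have key : α x ^ 2 ≤ β x * γ x := by
    obtain ⟨ε, εpos, hball⟩ := Metric.isOpen_iff.1 isOpen_Ioo x hx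
    have hev : ∀ᶠ r in 𝓝[>] (0:ℝ),
        (⨍ y in closedBall x r, (Set.Ioo c d).indicator α y) ^ 2
          ≤ (⨍ y in closedBall x r, (Set.Ioo c d).indicator β y)
            * (⨍ y in closedBall x r, (Set.Ioo c d).indicator γ y) := by
      filter_upwards [self_mem_nhdsWithin,
        nhdsWithin_le_nhds (Iio_mem_nhds εpos)] with r hr hrε
      have hsub : closedBall x r ⊆ Set.Ioo c d := fun y hy =>
        hball (mem_ball.2 (lt_of_le_of_lt (mem_closedBall.1 hy) hrε))
      have conv : ∀ (L : ℝ → ℝ), (∫ y in closedBall x r, (Set.Ioo c d).indicator L y)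
          = ∫ y in closedBall x r, L y ∂(volume.restrict (Set.Ioo c d)) := by
        intro L
        rw [Measure.restrict_restrict measurableSet_closedBall,
          Set.inter_eq_self_of_subset_left hsub]
        exact setIntegral_congr_fun measurableSet_closedBall
          (fun y hy => Set.indicator_of_mem (hsub hy) L)
      have hkey := key_set_ineq c d hcd a₁ a₂ b₁ b₂ ha₁ hb₁ a b α β γ ham hbm hab hbb
        hα hβ hγ (closedBall x r) measurableSet_closedBall
      rw [setAverage_eq, setAverage_eq, setAverage_eq, smul_eq_mul, smul_eq_mul,
        smul_eq_mul, conv α, conv β, conv γ]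
      set V := ((volume : Measure ℝ) (closedBall x r)).toReal⁻¹ with hV
      calc (V * ∫ y in closedBall x r, α y ∂(volume.restrict (Set.Ioo c d))) ^ 2
          = V ^ 2 * (∫ y in closedBall x r, α y ∂(volume.restrict (Set.Ioo c d))) ^ 2 := by
            ring
        _ ≤ V ^ 2 * ((∫ y in closedBall x r, β y ∂(volume.restrict (Set.Ioo c d)))
              * (∫ y in closedBall x r, γ y ∂(volume.restrict (Set.Ioo c d)))) :=
            mul_le_mul_of_nonneg_left hkey (sq_nonneg V)
        _ = (V * ∫ y in closedBall x r, β y ∂(volume.restrict (Set.Ioo c d)))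
              * (V * ∫ y in closedBall x r, γ y ∂(volume.restrict (Set.Ioo c d))) := by
            ring
    have := le_of_tendsto_of_tendsto (hA.pow 2) (hB.mul hG) hev
    rwa [Set.indicator_of_mem hx, Set.indicator_of_mem hx, Set.indicator_of_mem hx] at this
  refine ⟨key, ?_⟩
  have hα0 : 0 < α x := lt_of_lt_of_le (inv_pos.2 ha₂) hαx.1
  have hγ0 : 0 < γ x := lt_of_lt_of_le (inv_pos.2 hb₂) hγx.1
  have he : ((α x)⁻¹) ^ 2 * β x = β x / (α x) ^ 2 := by
    rw [inv_pow]; ring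
  rw [he, inv_eq_one_div, div_le_div_iff₀ hγ0 (by positivity)]
  nlinarith [key]
end
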